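/- arXiv:1809.10106 — 2 statements merged into one kernel-verified Lean document; each statement's English description precedes it below -/
import Mathlib

section
/- Let n ≥ 1, m ≥ 0, and let φ ⊆ Bool^n × Bool^n × Bool^m be a predicate. Then the workflow authorization policy W_φ is one-shot resilient for budget n if and only if there exists x ∈ Bool^n such that for all y ∈ Bool^n there exists z ∈ Bool^m with φ(x, y, z). -/
/-- A workflow authorization policy `W = (S, ≼, U, A, C)`:
steps `S`, an ordering relation `ord` (the partial order `≼`), users `U`,
a step authorization relation `A ⊆ S × U`, and a set `C` of constraints.
A constraint is a pair `(T, Θ)` where `T ⊆ S` and `Θ` is a set of functions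
from `T` to `U` (represented as `σ → Option υ` with domain exactly `T`). -/
structure WAP (σ υ : Type) where
  S : Finset σ
  ord : σ → σ → Prop
  U : Finset υ
  A : Set (σ × υ)
  C : Set (Finset σ × Set (σ → Option υ))

namespace WAP

variable {σ υ : Type} [DecidableEq σ] [DecidableEq υ]

/-- Well-formedness: `ord` is a partial order on `S`, `A ⊆ S × U`, and every
constraint `(T, Θ)` has `T ⊆ S` and `Θ` a set of functions from `T` to `U`. -/
def WellFormed (W : WAP σ υ) : Prop :=
  (∀ s ∈ W.S, W.ord s s) ∧
  (∀ s₁ ∈ W.S, ∀ s₂ ∈ W.S, W.ord s₁ s₂ → W.ord s₂ s₁ → s₁ = s₂) ∧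
  (∀ s₁ ∈ W.S, ∀ s₂ ∈ W.S, ∀ s₃ ∈ W.S, W.ord s₁ s₂ → W.ord s₂ s₃ → W.ord s₁ s₃) ∧
  (∀ p ∈ W.A, p.1 ∈ W.S ∧ p.2 ∈ W.U) ∧
  (∀ c ∈ W.C, c.1 ⊆ W.S ∧
    ∀ θ ∈ c.2, (∀ s, θ s ≠ none ↔ s ∈ c.1) ∧ ∀ s u, θ s = some u → u ∈ W.U)

/-- A partial plan: a partial function from `S` to `U` whose domain is
causally closed (if `s₁` is assigned and `s₂ ≺ s₁` then `s₂` is assigned). -/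
def IsPartialPlan (W : WAP σ υ) (θ : σ → Option υ) : Prop :=
  (∀ s u, θ s = some u → s ∈ W.S ∧ u ∈ W.U) ∧
  ∀ s₁ s₂, s₁ ∈ W.S → s₂ ∈ W.S → θ s₁ ≠ none → W.ord s₂ s₁ → s₂ ≠ s₁ → θ s₂ ≠ none

/-- Restriction of a partial plan to a set `T` of steps. -/
def restrictTo (θ : σ → Option υ) (T : Finset σ) : σ → Option υ :=
  fun s => if s ∈ T then θ s else none

/-- Validity of a (partial) plan: every assignment is authorized, and every
constraint whose step set is contained in the domain is satisfied. -/
def Valid (W : WAP σ υ) (θ : σ → Option υ) : Prop :=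
  (∀ s u, θ s = some u → (s, u) ∈ W.A) ∧
  ∀ c ∈ W.C, (∀ s ∈ c.1, θ s ≠ none) → restrictTo θ c.1 ∈ c.2

/-- A plan: a partial plan whose domain is all of `S`. -/
def IsPlan (W : WAP σ υ) (θ : σ → Option υ) : Prop :=
  W.IsPartialPlan θ ∧ ∀ s ∈ W.S, θ s ≠ none

def IsValidPlan (W : WAP σ υ) (θ : σ → Option υ) : Prop :=
  W.IsPlan θ ∧ W.Valid θ

/-- `θ` assigns no user from `Δ`. -/
def Avoids (θ : σ → Option υ) (Δ : Finset υ) : Prop :=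
  ∀ s u, θ s = some u → u ∉ Δ

/-- Static resiliency for budget `t`. -/
def StaticallyResilient (W : WAP σ υ) (t : ℕ) : Prop :=
  ∀ Δ : Finset υ, Δ ⊆ W.U → Δ.card ≤ t → ∃ θ, W.IsValidPlan θ ∧ Avoids θ Δ

/-- A move of Player 1: assign a user `u ∈ U ∖ Δ` to a not-yet-assigned step,
so that the result remains a causally closed partial plan and remains valid
(if the extension were invalid, Player 2 would win at once). -/
def P1Move (W : WAP σ υ) (Δ : Finset υ) (θ θ' : σ → Option υ) : Prop :=
  ∃ s u, s ∈ W.S ∧ θ s = none ∧ u ∈ W.U ∧ u ∉ Δ ∧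
    θ' = Function.update θ s (some u) ∧
    W.IsPartialPlan θ' ∧ W.Valid θ'

/-- A move of Player 2 in the one-shot resiliency game: either pass, or
(if it has not yet struck) strike, adding at most `t` users of `U` to `Δ`. -/
def OneShotP2Move (W : WAP σ υ) (t : ℕ) (Δ : Finset υ) (struck : Bool)
    (Δ' : Finset υ) (struck' : Bool) : Prop :=
  (Δ' = Δ ∧ struck' = struck) ∨
  (struck = false ∧ struck' = true ∧ Δ ⊆ Δ' ∧ Δ' ⊆ W.U ∧ (Δ' \ Δ).card ≤ t)

/-- Player 1 can force a win of the one-shot resiliency game within `n`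
more rounds, from the given configuration (`struck` records whether
Player 2 has already struck).  Player 1 has won once the (valid) partial
plan has been extended to a valid plan on all of `S`; otherwise, for every
move of Player 2 there must be a move of Player 1 from which Player 1 can
still force a win.  Since each round assigns one more step, the game from
the initial configuration lasts at most `|S|` rounds. -/
def OneShotWins (W : WAP σ υ) (t : ℕ) :
    ℕ → Finset υ → (σ → Option υ) → Bool → Prop
  | 0, _, θ, _ => (∀ s ∈ W.S, θ s ≠ none) ∧ W.IsPartialPlan θ ∧ W.Valid θ
  | n + 1, Δ, θ, struck =>
      ((∀ s ∈ W.S, θ s ≠ none) ∧ W.IsPartialPlan θ ∧ W.Valid θ) ∨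
      ((∃ s ∈ W.S, θ s = none) ∧
        ∀ Δ' struck', OneShotP2Move W t Δ struck Δ' struck' →
          ∃ θ', P1Move W Δ' θ θ' ∧ OneShotWins W t n Δ' θ' struck')

/-- One-shot resiliency for budget `t`: Player 1 wins the one-shot
resiliency game (from the initial configuration `(∅, ∅)`) no matter how
Player 2 plays. -/
def OneShotResilient (W : WAP σ υ) (t : ℕ) : Prop :=
  OneShotWins W t W.S.card ∅ (fun _ => none) false

/-- A move of Player 2 in the decremental resiliency game: add zero or more
users of `U` to `Δ`, subject to `|Δ| ≤ t` throughout. -/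
def DecP2Move (W : WAP σ υ) (t : ℕ) (Δ Δ' : Finset υ) : Prop :=
  Δ ⊆ Δ' ∧ Δ' ⊆ W.U ∧ Δ'.card ≤ t

/-- Player 1 can force a win of the decremental resiliency game within `n`
more rounds. -/
def DecWins (W : WAP σ υ) (t : ℕ) : ℕ → Finset υ → (σ → Option υ) → Prop
  | 0, _, θ => (∀ s ∈ W.S, θ s ≠ none) ∧ W.IsPartialPlan θ ∧ W.Valid θ
  | n + 1, Δ, θ =>
      ((∀ s ∈ W.S, θ s ≠ none) ∧ W.IsPartialPlan θ ∧ W.Valid θ) ∨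
      ((∃ s ∈ W.S, θ s = none) ∧
        ∀ Δ', DecP2Move W t Δ Δ' →
          ∃ θ', P1Move W Δ' θ θ' ∧ DecWins W t n Δ' θ')

/-- Decremental resiliency for budget `t`: Player 1 wins the decremental
resiliency game no matter how Player 2 plays. -/
def DecrementallyResilient (W : WAP σ υ) (t : ℕ) : Prop :=
  DecWins W t W.S.card ∅ (fun _ => none)

end WAP
section PhiConstruction

open WAP

/-- A step of `W_φ`: `Sum.inl i` is `x_{i+1}`, `Sum.inr (Sum.inl i)` is
`y_{i+1}`, and `Sum.inr (Sum.inr l)` is `z_{l+1}` (0-indexed). -/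
abbrev StepPhi (n m : ℕ) := Sum (Fin n) (Sum (Fin n) (Fin m))

/-- A user of `W_φ`: `Sum.inl (b, i)` is a `⊤/⊥`-variant user (`⊤` iff
`b = true`) with index `i`, and `Sum.inr (b, j)` is a `t/f`-variant user
(`t` iff `b = true`) with index `j`. -/
abbrev UserPhi := Sum (Bool × ℕ) (Bool × ℕ)

/-- The rank of a step in the linear order `x₁ ≺ ⋯ ≺ x_n ≺ y₁ ≺ ⋯ ≺ y_n ≺
z₁ ≺ ⋯ ≺ z_m`. -/
def rankPhi {n m : ℕ} : StepPhi n m → ℕ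
  | Sum.inl i => i.1
  | Sum.inr (Sum.inl i) => n + i.1
  | Sum.inr (Sum.inr l) => n + n + l.1

/-- `U_bool = {(⊥,i), (⊤,i) : 1 ≤ i ≤ n+1}`. -/
def UboolFin (n : ℕ) : Finset UserPhi :=
  ((({false, true} : Finset Bool)) ×ˢ Finset.Icc 1 (n + 1)).image Sum.inl

/-- `U_star = {(f,1),(t,2),(f,3),(t,4),…,(f,2n−1),(t,2n)}`: the user with
index `j` represents `t` exactly when `j` is even. -/
def UstarFin (n : ℕ) : Finset UserPhi :=
  (Finset.Icc 1 (2 * n)).image (fun j => Sum.inr (decide (j % 2 = 0), j))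

/-- The truth value represented by `θ` at an `x`-step (true iff a `⊤`-user). -/
def xVal {n m : ℕ} (θ : StepPhi n m → Option UserPhi) (i : Fin n) : Bool :=
  match θ (Sum.inl i) with
  | some (Sum.inl (b, _)) => b
  | _ => false

/-- The truth value represented by `θ` at a `y`-step (true iff a `t`-user). -/
def yVal {n m : ℕ} (θ : StepPhi n m → Option UserPhi) (i : Fin n) : Bool :=
  match θ (Sum.inr (Sum.inl i)) with
  | some (Sum.inr (b, _)) => b
  | _ => false

/-- The truth value represented by `θ` at a `z`-step (true iff a `⊤`-user). -/
def zVal {n m : ℕ} (θ : StepPhi n m → Option UserPhi) (l : Fin m) : Bool :=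
  match θ (Sum.inr (Sum.inr l)) with
  | some (Sum.inl (b, _)) => b
  | _ => false

/-- The workflow authorization policy `W_φ` (the combinatorial core of the
paper's Σ₃ᵖ-hardness reduction): steps `x₁ ≺ ⋯ ≺ x_n ≺ y₁ ≺ ⋯ ≺ y_n ≺ z₁ ≺ ⋯
≺ z_m`; users `U_bool ∪ U_star`; `x`- and `z`-steps may be assigned any
`U_bool` user and `y`-steps any `U_star` user; constraints: the ordering
constraints on consecutive `y`-steps (indices in `U_star` strictly
increasing) plus the global constraint `(S, Θ_φ)`. -/
def WPhi (n m : ℕ)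
    (φ : (Fin n → Bool) → (Fin n → Bool) → (Fin m → Bool) → Prop) :
    WAP (StepPhi n m) UserPhi :=
  { S := Finset.univ
    ord := fun a b => rankPhi a ≤ rankPhi b
    U := UboolFin n ∪ UstarFin n
    A := {p | match p.1 with
              | Sum.inr (Sum.inl _) => p.2 ∈ UstarFin n
              | _ => p.2 ∈ UboolFin n}
    C := {c | ∃ (i : Fin n) (h : i.1 + 1 < n),
            c = (({Sum.inr (Sum.inl i), Sum.inr (Sum.inl ⟨i.1 + 1, h⟩)} :
                    Finset (StepPhi n m)),
                 {θ | (∀ x, θ x ≠ none ↔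
                        x ∈ ({Sum.inr (Sum.inl i),
                              Sum.inr (Sum.inl ⟨i.1 + 1, h⟩)} :
                               Finset (StepPhi n m))) ∧
                      (∀ x v, θ x = some v → v ∈ UboolFin n ∪ UstarFin n) ∧
                      ∃ b₁ j₁ b₂ j₂,
                        θ (Sum.inr (Sum.inl i)) = some (Sum.inr (b₁, j₁)) ∧
                        θ (Sum.inr (Sum.inl ⟨i.1 + 1, h⟩)) =
                          some (Sum.inr (b₂, j₂)) ∧
                        j₁ < j₂})} ∪
        {((Finset.univ : Finset (StepPhi n m)),
          {θ | (∀ x, θ x ≠ none) ∧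
               (∀ x v, θ x = some v → v ∈ UboolFin n ∪ UstarFin n) ∧
               φ (xVal θ) (yVal θ) (zVal θ)})} }

end PhiConstruction
namespace WPhiProof
open WAP

variable {n m : ℕ}

lemma rankPhi_lt (s : StepPhi n m) : rankPhi s < n + (n + m) := by
  rcases s with i | i | l <;> simp [rankPhi] <;> omega

lemma rankPhi_injective : Function.Injective (rankPhi (n := n) (m := m)) := by
  rintro (i | i | i) (j | j | j) h <;>
    simp only [rankPhi] at h <;>
    have hi2 := i.2 <;> have hj2 := j.2 <;>
    first
      | (exact congrArg Sum.inl (Fin.ext (by omega)))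
      | (exact congrArg (Sum.inr ∘ Sum.inl) (Fin.ext (by omega)))
      | (exact congrArg (Sum.inr ∘ Sum.inr) (Fin.ext (by omega)))
      | (exfalso; omega)

lemma exists_rank_eq (k : ℕ) (hk : k < n + (n + m)) : ∃ s : StepPhi n m, rankPhi s = k := by
  rcases Nat.lt_or_ge k n with h | h
  · exact ⟨Sum.inl ⟨k, h⟩, rfl⟩
  · rcases Nat.lt_or_ge k (n + n) with h2 | h2
    · exact ⟨Sum.inr (Sum.inl ⟨k - n, by omega⟩), by simp [rankPhi]; omega⟩
    · exact ⟨Sum.inr (Sum.inr ⟨k - (n + n), by omega⟩), by simp [rankPhi]; omega⟩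

lemma mem_UboolFin {u : UserPhi} :
    u ∈ UboolFin n ↔ ∃ b jj, 1 ≤ jj ∧ jj ≤ n + 1 ∧ u = Sum.inl (b, jj) := by
  simp only [UboolFin, Finset.mem_image, Finset.mem_product, Finset.mem_insert,
    Finset.mem_singleton, Finset.mem_Icc]
  constructor
  · rintro ⟨⟨b, jj⟩, ⟨_, h1, h2⟩, rfl⟩
    exact ⟨b, jj, h1, h2, rfl⟩
  · rintro ⟨b, jj, h1, h2, rfl⟩
    exact ⟨(b, jj), ⟨by cases b <;> simp, h1, h2⟩, rfl⟩

lemma mem_UstarFin {u : UserPhi} :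
    u ∈ UstarFin n ↔ ∃ j, 1 ≤ j ∧ j ≤ 2 * n ∧ u = Sum.inr (decide (j % 2 = 0), j) := by
  simp only [UstarFin, Finset.mem_image, Finset.mem_Icc]
  constructor
  · rintro ⟨j, ⟨h1, h2⟩, rfl⟩; exact ⟨j, h1, h2, rfl⟩
  · rintro ⟨j, h1, h2, rfl⟩; exact ⟨j, ⟨h1, h2⟩, rfl⟩

lemma ustar_user_mem {j : ℕ} (h1 : 1 ≤ j) (h2 : j ≤ 2 * n) :
    (Sum.inr (decide (j % 2 = 0), j) : UserPhi) ∈ UstarFin n :=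
  mem_UstarFin.2 ⟨j, h1, h2, rfl⟩

lemma card_UstarFin : (UstarFin n).card = 2 * n := by
  rw [UstarFin, Finset.card_image_of_injective _ (fun a b h => by
    simp only [Sum.inr.injEq, Prod.mk.injEq] at h; exact h.2 : Function.Injective
      (fun j => (Sum.inr (decide (j % 2 = 0), j) : UserPhi)))]
  simp

lemma exists_bool_user (Δ : Finset UserPhi) (hΔ : Δ.card ≤ n) (b : Bool) :
    ∃ jj, 1 ≤ jj ∧ jj ≤ n + 1 ∧ (Sum.inl (b, jj) : UserPhi) ∉ Δ := by
  by_contra hcon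
  push_neg at hcon
  have hsub : (Finset.Icc 1 (n + 1)).image (fun jj => (Sum.inl (b, jj) : UserPhi)) ⊆ Δ := by
    intro u hu
    obtain ⟨jj, hjj, rfl⟩ := Finset.mem_image.1 hu
    rw [Finset.mem_Icc] at hjj
    exact hcon jj hjj.1 hjj.2
  have hcard := Finset.card_le_card hsub
  rw [Finset.card_image_of_injective _ (fun a c h => by simpa using h :
      Function.Injective (fun jj => (Sum.inl (b, jj) : UserPhi)))] at hcard
  simp [Nat.card_Icc] at hcard
  omega

end WPhiProof

namespace WPhiProof
open WAP

variable {n m : ℕ}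

/-- The invariant maintained by Player 1's strategy after `k` rounds. -/
def Inv (xs : Fin n → Bool) (zf : (Fin n → Bool) → Fin m → Bool)
    (k : ℕ) (Δ : Finset UserPhi) (θ : StepPhi n m → Option UserPhi) (struck : Bool) : Prop :=
  (∀ s, θ s ≠ none ↔ rankPhi s < k) ∧
  Δ.card ≤ n ∧
  Δ ⊆ UboolFin n ∪ UstarFin n ∧
  (struck = false → Δ = ∅) ∧
  (∀ i : Fin n, ∀ u, θ (Sum.inl i) = some u →
     ∃ jj, 1 ≤ jj ∧ jj ≤ n + 1 ∧ u = Sum.inl (xs i, jj)) ∧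
  (∀ l : Fin m, ∀ u, θ (Sum.inr (Sum.inr l)) = some u →
     ∃ jj, 1 ≤ jj ∧ jj ≤ n + 1 ∧ u = Sum.inl (zf (yVal θ) l, jj)) ∧
  ∃ g : ℕ → ℕ,
    (∀ i j, i < j → j < n → g i < g j) ∧
    (∀ i, i < n → 1 ≤ g i ∧ g i ≤ 2 * n) ∧
    (∀ i : Fin n, (i : ℕ) + n < k →
       θ (Sum.inr (Sum.inl i)) = some (Sum.inr (decide (g i % 2 = 0), g i))) ∧
    (∀ i, i < n → k ≤ i + n → (Sum.inr (decide (g i % 2 = 0), g i) : UserPhi) ∉ Δ) ∧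
    (struck = false → ∀ i, i < n → g i = i + 1)

variable {φ : (Fin n → Bool) → (Fin n → Bool) → (Fin m → Bool) → Prop}
variable {xs : Fin n → Bool} {zf : (Fin n → Bool) → Fin m → Bool}
variable {k : ℕ} {Δ : Finset UserPhi} {θ : StepPhi n m → Option UserPhi} {struck : Bool}

lemma users_mem_of_inv (hInv : Inv xs zf k Δ θ struck) :
    ∀ s u, θ s = some u → u ∈ UboolFin n ∪ UstarFin n := by
  obtain ⟨hdom, -, -, -, hx, hzc, g, hg1, hg2, hg3, -, -⟩ := hInv
  rintro (i | i | l) u hu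
  · obtain ⟨jj, h1, h2, rfl⟩ := hx i u hu
    exact Finset.mem_union_left _ (mem_UboolFin.2 ⟨_, jj, h1, h2, rfl⟩)
  · have hr : (i : ℕ) + n < k := by
      have := (hdom (Sum.inr (Sum.inl i))).1 (by simp [hu])
      simp only [rankPhi] at this; omega
    have := hg3 i hr
    rw [hu] at this
    obtain rfl := (Option.some.inj this).symm
    exact Finset.mem_union_right _ (ustar_user_mem (hg2 i i.2).1 (hg2 i i.2).2)
  · obtain ⟨jj, h1, h2, rfl⟩ := hzc l u hu
    exact Finset.mem_union_left _ (mem_UboolFin.2 ⟨_, jj, h1, h2, rfl⟩)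

lemma partialPlan_of_inv (hInv : Inv xs zf k Δ θ struck) :
    (WPhi n m φ).IsPartialPlan θ := by
  constructor
  · intro s u hu
    exact ⟨Finset.mem_univ s, users_mem_of_inv hInv s u hu⟩
  · intro s₁ s₂ _ _ h1 hord _
    rw [hInv.1] at h1 ⊢
    exact lt_of_le_of_lt hord h1

lemma valid_of_inv (hz : ∀ y, φ xs y (zf y)) (hInv : Inv xs zf k Δ θ struck) :
    (WPhi n m φ).Valid θ := by
  have hInv' := hInv
  obtain ⟨hdom, -, -, -, hx, hzc, g, hg1, hg2, hg3, -, -⟩ := hInv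
  constructor
  · rintro (i | i | l) u hu
    · obtain ⟨jj, h1, h2, rfl⟩ := hx i u hu
      exact mem_UboolFin.2 ⟨_, jj, h1, h2, rfl⟩
    · have hr : (i : ℕ) + n < k := by
        have := (hdom (Sum.inr (Sum.inl i))).1 (by simp [hu])
        simp only [rankPhi] at this; omega
      have := hg3 i hr
      rw [hu] at this
      obtain rfl := (Option.some.inj this).symm
      exact ustar_user_mem (hg2 i i.2).1 (hg2 i i.2).2
    · obtain ⟨jj, h1, h2, rfl⟩ := hzc l u hu
      exact mem_UboolFin.2 ⟨_, jj, h1, h2, rfl⟩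
  · rintro c (hc | hc)
    · -- ordering constraint
      obtain ⟨i, hi, rfl⟩ := hc
      intro hall
      set T : Finset (StepPhi n m) :=
        {Sum.inr (Sum.inl i), Sum.inr (Sum.inl ⟨i.1 + 1, hi⟩)} with hT
      have hmem1 : (Sum.inr (Sum.inl i) : StepPhi n m) ∈ T := by simp [hT]
      have hmem2 : (Sum.inr (Sum.inl ⟨i.1 + 1, hi⟩) : StepPhi n m) ∈ T := by simp [hT]
      have hr1 : (i : ℕ) + n < k := by
        have := (hdom _).1 (hall _ hmem1)
        simp only [rankPhi] at this; omega
      have hr2 : (i : ℕ) + 1 + n < k := by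
        have := (hdom _).1 (hall _ hmem2)
        simp only [rankPhi] at this; omega
      have h1 := hg3 i hr1
      have h2 := hg3 ⟨i.1 + 1, hi⟩ hr2
      refine ⟨?_, ?_, ?_⟩
      · intro s
        constructor
        · intro hs
          by_contra hns
          simp only [restrictTo, if_neg hns] at hs
          exact hs rfl
        · intro hs
          simpa only [restrictTo, if_pos hs] using hall s hs
      · intro s v hs
        rcases Decidable.em (s ∈ T) with h | h
        · simp only [restrictTo, if_pos h] at hs
          exact users_mem_of_inv hInv' s v hs
        · simp [restrictTo, if_neg h] at hs
      · refine ⟨decide (g i % 2 = 0), g i, decide (g (i.1 + 1) % 2 = 0), g (i.1 + 1),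
          ?_, ?_, ?_⟩
        · simpa only [restrictTo, if_pos hmem1] using h1
        · simpa only [restrictTo, if_pos hmem2] using h2
        · exact hg1 i.1 (i.1 + 1) (Nat.lt_succ_self _) hi
    · -- global constraint
      rw [Set.mem_singleton_iff] at hc
      subst hc
      intro hall
      have hall' : ∀ s, θ s ≠ none := fun s => hall s (Finset.mem_univ s)
      have hrt : restrictTo θ (Finset.univ : Finset (StepPhi n m)) = θ := by
        funext s; simp [restrictTo]
      rw [hrt]
      refine ⟨hall', fun s v hs => users_mem_of_inv hInv' s v hs, ?_⟩
      have hxv : xVal θ = xs := by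
        funext i
        obtain ⟨u, hu⟩ := Option.ne_none_iff_exists'.1 (hall' (Sum.inl i))
        obtain ⟨jj, -, -, rfl⟩ := hx i u hu
        simp [xVal, hu]
      have hzv : zVal θ = zf (yVal θ) := by
        funext l
        obtain ⟨u, hu⟩ := Option.ne_none_iff_exists'.1 (hall' (Sum.inr (Sum.inr l)))
        obtain ⟨jj, -, -, rfl⟩ := hzc l u hu
        simp [zVal, hu]
      rw [hxv, hzv]
      exact hz (yVal θ)

end WPhiProof

namespace WPhiProof
open WAP

variable {n m : ℕ}
variable {φ : (Fin n → Bool) → (Fin n → Bool) → (Fin m → Bool) → Prop}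
variable {xs : Fin n → Bool} {zf : (Fin n → Bool) → Fin m → Bool}
variable {k : ℕ} {Δ Δ' : Finset UserPhi} {θ : StepPhi n m → Option UserPhi}
variable {struck struck' : Bool}

lemma inv_p2 (hInv : Inv xs zf k Δ θ struck)
    (hmv : OneShotP2Move (WPhi n m φ) n Δ struck Δ' struck') :
    Inv xs zf k Δ' θ struck' := by
  rcases hmv with ⟨rfl, rfl⟩ | ⟨hs0, hs1, -, hsubU, hcard'⟩
  · exact hInv
  · obtain ⟨hdom, hcard, hsub, h4, hx, hzc, g, hg1, hg2, hg3, hg4, hg5⟩ := hInv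
    have hΔ : Δ = ∅ := h4 hs0
    subst hΔ
    rw [Finset.sdiff_empty] at hcard'
    have hpin := hg5 hs0
    subst hs1
    set c := k - n with hc
    set Avail : Finset ℕ := (Finset.Icc (c + 1) (2 * n)).filter
      (fun j => (Sum.inr (decide (j % 2 = 0), j) : UserPhi) ∉ Δ') with hAvail
    have hAcard : n - c ≤ Avail.card := by
      have hsplit := Finset.card_filter_add_card_filter_not
        (s := Finset.Icc (c + 1) (2 * n))
        (p := fun j => (Sum.inr (decide (j % 2 = 0), j) : UserPhi) ∈ Δ')
      have hinj : ((Finset.Icc (c + 1) (2 * n)).filter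
          (fun j => (Sum.inr (decide (j % 2 = 0), j) : UserPhi) ∈ Δ')).card ≤ Δ'.card := by
        apply Finset.card_le_card_of_injOn
          (fun j => (Sum.inr (decide (j % 2 = 0), j) : UserPhi))
        · intro j hj; exact (Finset.mem_filter.1 hj).2
        · intro a _ b _ h
          simp only [Sum.inr.injEq, Prod.mk.injEq] at h
          exact h.2
      have hIcc : (Finset.Icc (c + 1) (2 * n)).card = 2 * n - c := by
        rw [Nat.card_Icc]; omega
      have hA : Avail = (Finset.Icc (c + 1) (2 * n)).filter
          (fun j => ¬ (Sum.inr (decide (j % 2 = 0), j) : UserPhi) ∈ Δ') := rfl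
      rw [hA]
      omega
    set f := Avail.orderEmbOfCardLe hAcard with hf
    have hfmem : ∀ a, f a ∈ Avail := fun a => Avail.orderEmbOfCardLe_mem hAcard a
    have hfprop : ∀ a, c + 1 ≤ f a ∧ f a ≤ 2 * n ∧
        (Sum.inr (decide ((f a) % 2 = 0), f a) : UserPhi) ∉ Δ' := by
      intro a
      have := hfmem a
      rw [hAvail, Finset.mem_filter, Finset.mem_Icc] at this
      exact ⟨this.1.1, this.1.2, this.2⟩
    set G : ℕ → ℕ := fun i => if hi : i < c then g i else
      if h2 : i - c < n - c then (f ⟨i - c, h2⟩ : ℕ) else 0 with hG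
    have hGlo : ∀ i, i < c → G i = g i := by
      intro i h
      simp only [hG]
      rw [dif_pos h]
    have hGhi : ∀ i (h : ¬ i < c) (h2 : i - c < n - c), G i = f ⟨i - c, h2⟩ := by
      intro i h h2
      simp only [hG]
      rw [dif_neg h, dif_pos h2]
    refine ⟨hdom, hcard', hsubU, by simp, hx, hzc, G, ?_, ?_, ?_, ?_, by simp⟩
    · intro i j hij hj
      rcases Nat.lt_or_ge j c with hjc | hjc
      · rw [hGlo i (by omega), hGlo j hjc]
        exact hg1 i j hij hj
      · have hj2 : j - c < n - c := by omega
        rw [hGhi j (by omega) hj2]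
        rcases Nat.lt_or_ge i c with hic | hic
        · rw [hGlo i hic]
          have e1 := hpin i (by omega)
          have e2 := (hfprop ⟨j - c, hj2⟩).1
          omega
        · have hi2 : i - c < n - c := by omega
          rw [hGhi i (by omega) hi2]
          exact f.strictMono (by simp only [Fin.mk_lt_mk]; omega)
    · intro i hi
      rcases Nat.lt_or_ge i c with hic | hic
      · rw [hGlo i hic]; exact hg2 i hi
      · have hi2 : i - c < n - c := by omega
        rw [hGhi i (by omega) hi2]
        have := hfprop ⟨i - c, hi2⟩
        omega
    · intro i hik
      rw [hGlo i (by omega)]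
      exact hg3 i hik
    · intro i hi hik
      have hi2 : i - c < n - c := by omega
      rw [hGhi i (by omega) hi2]
      exact (hfprop ⟨i - c, hi2⟩).2.2

lemma dom_update (hdom : ∀ s, θ s ≠ none ↔ rankPhi s < k) {s₀ : StepPhi n m}
    (hs₀ : rankPhi s₀ = k) (u : UserPhi) :
    ∀ s, Function.update θ s₀ (some u) s ≠ none ↔ rankPhi s < k + 1 := by
  intro s
  rcases eq_or_ne s s₀ with rfl | hne
  · simp [Function.update_self, hs₀]
  · rw [Function.update_of_ne hne, hdom s]
    have : rankPhi s ≠ k := fun h => hne (rankPhi_injective (h.trans hs₀.symm))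
    omega

lemma theta_none_of_rank (hdom : ∀ s, θ s ≠ none ↔ rankPhi s < k) {s₀ : StepPhi n m}
    (hs₀ : rankPhi s₀ = k) : θ s₀ = none := by
  by_contra h
  have := (hdom s₀).1 h
  omega

lemma yVal_update_x (i0 : Fin n) (v : Option UserPhi) :
    yVal (Function.update θ (Sum.inl i0) v) = yVal θ := by
  funext i
  unfold yVal
  rw [Function.update_of_ne (by simp)]

lemma yVal_update_z (l0 : Fin m) (v : Option UserPhi) :
    yVal (Function.update θ (Sum.inr (Sum.inr l0)) v) = yVal θ := by
  funext i
  unfold yVal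
  rw [Function.update_of_ne (by simp)]

lemma inv_p1_step (hz : ∀ y, φ xs y (zf y)) (hk : k < n + (n + m))
    (hInv : Inv xs zf k Δ θ struck) :
    ∃ θ', P1Move (WPhi n m φ) Δ θ θ' ∧ Inv xs zf (k + 1) Δ θ' struck := by
  have hInv' := hInv
  obtain ⟨hdom, hcard, hsub, h4, hx, hzc, g, hg1, hg2, hg3, hg4, hg5⟩ := hInv
  rcases Nat.lt_or_ge k n with hkn | hkn
  · -- x phase
    set i0 : Fin n := ⟨k, hkn⟩ with hi0
    set s₀ : StepPhi n m := Sum.inl i0 with hs₀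
    have hrank : rankPhi s₀ = k := rfl
    obtain ⟨jj, hj1, hj2, hjΔ⟩ := exists_bool_user Δ hcard (xs i0)
    set u : UserPhi := Sum.inl (xs i0, jj) with hu
    set θ' := Function.update θ s₀ (some u) with hθ'
    have hnone : θ s₀ = none := theta_none_of_rank hdom hrank
    have hInvNew : Inv xs zf (k + 1) Δ θ' struck := by
      refine ⟨dom_update hdom hrank u, hcard, hsub, h4, ?_, ?_, ?_⟩
      · intro i v hv
        rcases eq_or_ne i i0 with rfl | hne
        · rw [hθ', Function.update_self] at hv
          exact ⟨jj, hj1, hj2, (Option.some.inj hv).symm⟩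
        · rw [hθ', Function.update_of_ne (by simp [hs₀, hne])] at hv
          exact hx i v hv
      · intro l v hv
        rw [hθ', Function.update_of_ne (by simp [hs₀])] at hv
        rw [hθ', hs₀, yVal_update_x]
        exact hzc l v hv
      · refine ⟨g, hg1, hg2, ?_, ?_, hg5⟩
        · intro i hik
          exfalso; omega
        · intro i hi hik
          exact hg4 i hi (by omega)
    refine ⟨θ', ⟨s₀, u, Finset.mem_univ _, hnone, ?_, hjΔ, rfl,
      partialPlan_of_inv hInvNew, valid_of_inv hz hInvNew⟩, hInvNew⟩
    exact Finset.mem_union_left _ (mem_UboolFin.2 ⟨xs i0, jj, hj1, hj2, rfl⟩)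
  · rcases Nat.lt_or_ge k (n + n) with hk2 | hk2
    · -- y phase
      have hcn : k - n < n := by omega
      set c : ℕ := k - n with hc
      set i0 : Fin n := ⟨c, hcn⟩ with hi0
      set s₀ : StepPhi n m := Sum.inr (Sum.inl i0) with hs₀
      have hrank : rankPhi s₀ = k := by simp [hs₀, rankPhi, hi0]; omega
      set u : UserPhi := Sum.inr (decide (g c % 2 = 0), g c) with hu
      have hjΔ : u ∉ Δ := hg4 c hcn (by omega)
      set θ' := Function.update θ s₀ (some u) with hθ'
      have hnone : θ s₀ = none := theta_none_of_rank hdom hrank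
      have hInvNew : Inv xs zf (k + 1) Δ θ' struck := by
        refine ⟨dom_update hdom hrank u, hcard, hsub, h4, ?_, ?_, ?_⟩
        · intro i v hv
          rw [hθ', Function.update_of_ne (by simp [hs₀])] at hv
          exact hx i v hv
        · intro l v hv
          rw [hθ', Function.update_of_ne (by simp [hs₀])] at hv
          exfalso
          have := (hdom (Sum.inr (Sum.inr l))).1 (by simp [hv])
          simp only [rankPhi] at this
          omega
        · refine ⟨g, hg1, hg2, ?_, ?_, hg5⟩
          · intro i hik
            rcases eq_or_ne i i0 with rfl | hne
            · rw [hθ', Function.update_self]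
            · have hlt : (i : ℕ) + n < k := by
                have : (i : ℕ) ≠ c := fun h => hne (Fin.ext h)
                omega
              rw [hθ', Function.update_of_ne (by simp [hs₀, hne])]
              exact hg3 i hlt
          · intro i hi hik
            exact hg4 i hi (by omega)
      refine ⟨θ', ⟨s₀, u, Finset.mem_univ _, hnone, ?_, hjΔ, rfl,
        partialPlan_of_inv hInvNew, valid_of_inv hz hInvNew⟩, hInvNew⟩
      exact Finset.mem_union_right _ (ustar_user_mem (hg2 c hcn).1 (hg2 c hcn).2)
    · -- z phase
      have hlm : k - (n + n) < m := by omega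
      set l0 : Fin m := ⟨k - (n + n), hlm⟩ with hl0
      set s₀ : StepPhi n m := Sum.inr (Sum.inr l0) with hs₀
      have hrank : rankPhi s₀ = k := by simp [hs₀, rankPhi, hl0]; omega
      obtain ⟨jj, hj1, hj2, hjΔ⟩ := exists_bool_user Δ hcard (zf (yVal θ) l0)
      set u : UserPhi := Sum.inl (zf (yVal θ) l0, jj) with hu
      set θ' := Function.update θ s₀ (some u) with hθ'
      have hnone : θ s₀ = none := theta_none_of_rank hdom hrank
      have hyv : yVal θ' = yVal θ := by rw [hθ', hs₀, yVal_update_z]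
      have hInvNew : Inv xs zf (k + 1) Δ θ' struck := by
        refine ⟨dom_update hdom hrank u, hcard, hsub, h4, ?_, ?_, ?_⟩
        · intro i v hv
          rw [hθ', Function.update_of_ne (by simp [hs₀])] at hv
          exact hx i v hv
        · intro l v hv
          rw [hyv]
          rcases eq_or_ne l l0 with rfl | hne
          · rw [hθ', Function.update_self] at hv
            exact ⟨jj, hj1, hj2, (Option.some.inj hv).symm⟩
          · rw [hθ', Function.update_of_ne (by simp [hs₀, hne])] at hv
            exact hzc l v hv
        · refine ⟨g, hg1, hg2, ?_, ?_, hg5⟩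
          · intro i hik
            rw [hθ', Function.update_of_ne (by simp [hs₀])]
            exact hg3 i (by omega)
          · intro i hi hik
            exact hg4 i hi (by omega)
      refine ⟨θ', ⟨s₀, u, Finset.mem_univ _, hnone, ?_, hjΔ, rfl,
        partialPlan_of_inv hInvNew, valid_of_inv hz hInvNew⟩, hInvNew⟩
      exact Finset.mem_union_left _ (mem_UboolFin.2 ⟨_, jj, hj1, hj2, rfl⟩)

end WPhiProof

namespace WPhiProof
open WAP

variable {n m : ℕ}
variable {φ : (Fin n → Bool) → (Fin n → Bool) → (Fin m → Bool) → Prop}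
variable {xs : Fin n → Bool} {zf : (Fin n → Bool) → Fin m → Bool}

lemma wins_of_inv (hz : ∀ y, φ xs y (zf y)) :
    ∀ fuel k Δ θ struck, k + fuel = n + (n + m) → Inv xs zf k Δ θ struck →
      OneShotWins (WPhi n m φ) n fuel Δ θ struck := by
  intro fuel
  induction fuel with
  | zero =>
    intro k Δ θ struck hkN hInv
    have hk : k = n + (n + m) := by omega
    exact ⟨fun s _ => (hInv.1 s).2 (hk ▸ rankPhi_lt s),
      partialPlan_of_inv hInv, valid_of_inv hz hInv⟩
  | succ fuel ih =>
    intro k Δ θ struck hkN hInv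
    have hk : k < n + (n + m) := by omega
    refine Or.inr ⟨?_, ?_⟩
    · obtain ⟨s₀, hs₀⟩ := exists_rank_eq k hk
      exact ⟨s₀, Finset.mem_univ _, theta_none_of_rank hInv.1 hs₀⟩
    · intro Δ' struck' hmv
      have hInv2 := inv_p2 (φ := φ) hInv hmv
      obtain ⟨θ', hmove, hInv3⟩ := inv_p1_step hz hk hInv2
      exact ⟨θ', hmove, ih (k + 1) Δ' θ' struck' (by omega) hInv3⟩

lemma card_S : ((WPhi n m φ).S).card = n + (n + m) := by
  simp [WPhi]

lemma resilient_of_exists (hex : ∃ x : Fin n → Bool, ∀ y, ∃ z, φ x y z) :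
    (WPhi n m φ).OneShotResilient n := by
  obtain ⟨xs, hxs⟩ := hex
  unfold OneShotResilient
  rw [card_S]
  refine wins_of_inv (zf := fun y => (hxs y).choose) (fun y => (hxs y).choose_spec)
    (n + (n + m)) 0 ∅ (fun _ => none) false (by omega) ?_
  refine ⟨by simp, by simp, by simp, fun _ => rfl, by simp, by simp,
    fun i => i + 1, ?_, ?_, by simp, by simp, fun _ i _ => rfl⟩
  · intro i j hij hj; show i + 1 < j + 1; omega
  · intro i hi; show 1 ≤ i + 1 ∧ i + 1 ≤ 2 * n; omega

end WPhiProof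

namespace WPhiProof
open WAP

variable {n m : ℕ}
variable {φ : (Fin n → Bool) → (Fin n → Bool) → (Fin m → Bool) → Prop}
variable {k : ℕ} {Δ : Finset UserPhi} {θ θ' : StepPhi n m → Option UserPhi}

lemma strictMono_of_consec {N : ℕ} {f : Fin N → ℕ}
    (h : ∀ i : ℕ, ∀ hi : i + 1 < N, f ⟨i, by omega⟩ < f ⟨i + 1, hi⟩) : StrictMono f := by
  have H : ∀ b (hb : b < N) (a : Fin N), a.1 < b → f a < f ⟨b, hb⟩ := by
    intro b
    induction b with
    | zero => intro hb a ha; omega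
    | succ b ih =>
      intro hb a ha
      have hb' : b < N := by omega
      rcases Nat.lt_or_ge a.1 b with h' | h'
      · exact lt_trans (ih hb' a h') (h b hb)
      · have ha' : a = ⟨b, hb'⟩ := Fin.ext (show a.1 = b by omega)
        rw [ha']
        exact h b hb
  intro a b hab
  have := H b.1 b.2 a hab
  simpa using this

lemma p1move_dom (hdom : ∀ s, θ s ≠ none ↔ rankPhi s < k) (hk : k < n + (n + m))
    (hmv : P1Move (WPhi n m φ) Δ θ θ') :
    (∀ s, θ' s ≠ none ↔ rankPhi s < k + 1) ∧
    (∀ s u, θ s = some u → θ' s = some u) ∧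
    (∀ s u, θ s = none → θ' s = some u → u ∉ Δ) := by
  obtain ⟨s, u, hsS, hsnone, huU, huΔ, hteq, hpp, hval⟩ := hmv
  subst hteq
  have hrk : rankPhi s = k := by
    have h1 : ¬ rankPhi s < k := fun h => (hdom s).2 h hsnone
    by_contra hne
    have hgt : k < rankPhi s := by omega
    obtain ⟨s₀, hs₀⟩ := exists_rank_eq k hk
    have hne0 : s₀ ≠ s := fun h => by rw [h] at hs₀; omega
    have h2 : Function.update θ s (some u) s₀ ≠ none := by
      refine hpp.2 s s₀ (Finset.mem_univ _) (Finset.mem_univ _) ?_ ?_ hne0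
      · simp [Function.update_self]
      · show rankPhi s₀ ≤ rankPhi s
        omega
    rw [Function.update_of_ne hne0] at h2
    exact h2 (theta_none_of_rank hdom hs₀)
  refine ⟨dom_update hdom hrk u, ?_, ?_⟩
  · intro s' u' hu'
    have hne : s' ≠ s := fun h => by rw [h, hsnone] at hu'; exact nomatch hu'
    rw [Function.update_of_ne hne]
    exact hu'
  · intro s' u' hnone hu'
    rcases eq_or_ne s' s with rfl | hne
    · rw [Function.update_self] at hu'
      obtain rfl := Option.some.inj hu'
      exact huΔ
    · rw [Function.update_of_ne hne, hnone] at hu'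
      exact nomatch hu'

lemma play_out {struck : Bool} :
    ∀ fuel k Δ θ, k + fuel = n + (n + m) →
    (∀ s, θ s ≠ none ↔ rankPhi s < k) →
    OneShotWins (WPhi n m φ) n fuel Δ θ struck →
    ∃ θf : StepPhi n m → Option UserPhi, (∀ s, θf s ≠ none) ∧
      (∀ s u, θ s = some u → θf s = some u) ∧
      (∀ s u, θ s = none → θf s = some u → u ∉ Δ) ∧
      (WPhi n m φ).IsPartialPlan θf ∧ (WPhi n m φ).Valid θf := by
  intro fuel
  induction fuel with
  | zero =>
    intro k Δ θ hkN hdom hwin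
    obtain ⟨htot, hpp, hval⟩ := hwin
    exact ⟨θ, fun s => htot s (Finset.mem_univ s), fun _ _ h => h,
      fun s u h1 h2 => absurd h2 (by rw [h1]; exact fun h => nomatch h),
      hpp, hval⟩
  | succ fuel ih =>
    intro k Δ θ hkN hdom hwin
    have hk : k < n + (n + m) := by omega
    rcases hwin with ⟨htot, hpp, hval⟩ | ⟨-, hplay⟩
    · exact ⟨θ, fun s => htot s (Finset.mem_univ s), fun _ _ h => h,
        fun s u h1 h2 => absurd h2 (by rw [h1]; exact fun h => nomatch h),
        hpp, hval⟩
    · obtain ⟨θ', hmv, hwin'⟩ := hplay Δ struck (Or.inl ⟨rfl, rfl⟩)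
      obtain ⟨hdom', hext, havoid⟩ := p1move_dom hdom hk hmv
      obtain ⟨θf, htotf, hextf, havoidf, hppf, hvalf⟩ :=
        ih (k + 1) Δ θ' (by omega) hdom' hwin'
      refine ⟨θf, htotf, fun s u h => hextf s u (hext s u h), ?_, hppf, hvalf⟩
      intro s u hnone hf
      cases h1 : θ' s with
      | none => exact havoidf s u h1 hf
      | some v =>
        have heq2 := hextf s v h1
        rw [hf] at heq2
        obtain rfl : u = v := Option.some.inj heq2
        exact havoid s u hnone h1

lemma pass_phase {struck : Bool} :
    ∀ r rest k Δ θ, k + (r + rest) = n + (n + m) →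
    (∀ s, θ s ≠ none ↔ rankPhi s < k) →
    OneShotWins (WPhi n m φ) n (r + rest) Δ θ struck →
    ∃ θ' : StepPhi n m → Option UserPhi,
      (∀ s, θ' s ≠ none ↔ rankPhi s < k + r) ∧
      (∀ s u, θ s = some u → θ' s = some u) ∧
      OneShotWins (WPhi n m φ) n rest Δ θ' struck := by
  intro r
  induction r with
  | zero =>
    intro rest k Δ θ hkN hdom hwin
    exact ⟨θ, by simpa using hdom, fun _ _ h => h, by simpa using hwin⟩
  | succ r ih =>
    intro rest k Δ θ hkN hdom hwin
    have hk : k < n + (n + m) := by omega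
    have heq : r + 1 + rest = (r + rest) + 1 := by omega
    rw [heq] at hwin
    rcases hwin with ⟨htot, -, -⟩ | ⟨-, hplay⟩
    · exfalso
      obtain ⟨s₀, hs₀⟩ := exists_rank_eq k hk
      exact htot s₀ (Finset.mem_univ _) (theta_none_of_rank hdom hs₀)
    · obtain ⟨θ₁, hmv, hwin₁⟩ := hplay Δ struck (Or.inl ⟨rfl, rfl⟩)
      obtain ⟨hdom₁, hext₁, -⟩ := p1move_dom hdom hk hmv
      obtain ⟨θ', hdom', hext', hwin'⟩ := ih rest (k + 1) Δ θ₁ (by omega) hdom₁ hwin₁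
      refine ⟨θ', ?_, fun s u h => hext' s u (hext₁ s u h), hwin'⟩
      intro s
      rw [hdom' s]
      omega

end WPhiProof

namespace WPhiProof
open WAP

variable {n m : ℕ}
variable {φ : (Fin n → Bool) → (Fin n → Bool) → (Fin m → Bool) → Prop}

lemma exists_of_resilient (hn : 1 ≤ n) (hres : (WPhi n m φ).OneShotResilient n) :
    ∃ x : Fin n → Bool, ∀ y : Fin n → Bool, ∃ z : Fin m → Bool, φ x y z := by
  unfold OneShotResilient at hres
  rw [card_S] at hres
  have hsplit : n + (n + m) = n + (n + m) := rfl
  obtain ⟨θn, hdomn, hextn, hwinn⟩ :=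
    pass_phase n (n + m) 0 ∅ (fun _ => none) (by omega) (by simp) hres
  rw [Nat.zero_add] at hdomn
  refine ⟨xVal θn, ?_⟩
  intro y
  -- the indices Player 2 keeps
  set e : Fin n → ℕ := fun i => 2 * i.1 + (if y i then 2 else 1) with he
  have hemono : StrictMono e := by
    intro a b hab
    simp only [he]
    have : a.1 < b.1 := hab
    rcases Decidable.em (y a) with h | h <;> rcases Decidable.em (y b) with h' | h' <;>
      simp [h, h'] <;> omega
  have heparity : ∀ i, decide (e i % 2 = 0) = y i := by
    intro i
    have hei : e i = 2 * i.1 + (if y i then 2 else 1) := rfl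
    rcases hyi : y i with _ | _
    · rw [hei, hyi, if_neg (by simp)]
      simp only [decide_eq_false_iff_not]
      omega
    · rw [hei, hyi, if_pos rfl]
      simp only [decide_eq_true_eq]
      omega
  have hebound : ∀ i : Fin n, 1 ≤ e i ∧ e i ≤ 2 * n := by
    intro i
    have := i.2
    simp only [he]
    rcases Decidable.em (y i) with h | h <;> simp [h] <;> omega
  set K : Finset UserPhi :=
    Finset.univ.image (fun i : Fin n => (Sum.inr (decide (e i % 2 = 0), e i) : UserPhi))
    with hK
  have hKsub : K ⊆ UstarFin n := by
    intro u hu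
    obtain ⟨i, -, rfl⟩ := Finset.mem_image.1 hu
    exact ustar_user_mem (hebound i).1 (hebound i).2
  have hKcard : K.card = n := by
    rw [hK, Finset.card_image_of_injective _ (fun a b h => by
      simp only [Sum.inr.injEq, Prod.mk.injEq] at h
      exact hemono.injective h.2)]
    simp
  set Δy : Finset UserPhi := UstarFin n \ K with hΔy
  have hΔycard : Δy.card = n := by
    rw [hΔy, Finset.card_sdiff_of_subset hKsub, card_UstarFin, hKcard]
    omega
  have hΔyU : Δy ⊆ (WPhi n m φ).U := fun u hu =>
    Finset.mem_union_right _ (Finset.mem_sdiff.1 hu).1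
  -- unfold one round in which Player 2 strikes
  have hmw : n + m = (n + m - 1) + 1 := by omega
  rw [hmw] at hwinn
  rcases hwinn with ⟨htot, -, -⟩ | ⟨-, hplay⟩
  · exfalso
    obtain ⟨s₀, hs₀⟩ := exists_rank_eq (n := n) (m := m) n (by omega)
    exact htot s₀ (Finset.mem_univ _) (theta_none_of_rank hdomn hs₀)
  · obtain ⟨θ1, hmv, hwin1⟩ := hplay Δy true
      (Or.inr ⟨rfl, rfl, Finset.empty_subset _, hΔyU, by
        rw [Finset.sdiff_empty]; omega⟩)
    obtain ⟨hdom1, hext1, havoid1⟩ := p1move_dom hdomn (by omega) hmv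
    obtain ⟨θf, htotf, hextf, havoidf, hppf, hvalf⟩ :=
      play_out (n + m - 1) (n + 1) Δy θ1 (by omega) hdom1 hwin1
    have havoid : ∀ s u, n ≤ rankPhi s → θf s = some u → u ∉ Δy := by
      intro s u hr hsf
      have hsn : θn s = none := by
        by_contra h
        have := (hdomn s).1 h
        omega
      cases h1 : θ1 s with
      | none => exact havoidf s u h1 hsf
      | some v =>
        have heq2 := hextf s v h1
        rw [hsf] at heq2
        obtain rfl : u = v := Option.some.inj heq2
        exact havoid1 s u hsn h1
    -- x-values agree
    have hxv : xVal θf = xVal θn := by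
      funext i
      have h1 : θn (Sum.inl i) ≠ none := (hdomn _).2 (by simp [rankPhi])
      obtain ⟨u, hu⟩ := Option.ne_none_iff_exists'.1 h1
      have h3 : θf (Sum.inl i) = some u := hextf _ _ (hext1 _ _ hu)
      simp [xVal, hu, h3]
    -- y-values are forced
    have hy : ∀ i : Fin n, ∃ j, 1 ≤ j ∧ j ≤ 2 * n ∧
        θf (Sum.inr (Sum.inl i)) = some (Sum.inr (decide (j % 2 = 0), j)) ∧
        (Sum.inr (decide (j % 2 = 0), j) : UserPhi) ∈ K := by
      intro i
      obtain ⟨u, hu⟩ := Option.ne_none_iff_exists'.1 (htotf (Sum.inr (Sum.inl i)))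
      have hauth : u ∈ UstarFin n := hvalf.1 _ _ hu
      obtain ⟨j, h1, h2, rfl⟩ := mem_UstarFin.1 hauth
      have hnΔ : (Sum.inr (decide (j % 2 = 0), j) : UserPhi) ∉ Δy :=
        havoid _ _ (by simp [rankPhi]) hu
      have hKmem : (Sum.inr (decide (j % 2 = 0), j) : UserPhi) ∈ K := by
        by_contra h
        exact hnΔ (Finset.mem_sdiff.2 ⟨hauth, h⟩)
      exact ⟨j, h1, h2, hu, hKmem⟩
    choose J hJ1 hJ2 hJth hJK using hy
    have hmono : ∀ i : ℕ, ∀ hi : i + 1 < n, J ⟨i, by omega⟩ < J ⟨i + 1, hi⟩ := by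
      intro i hi
      set ifin : Fin n := ⟨i, by omega⟩ with hifin
      have hc : (({Sum.inr (Sum.inl ifin), Sum.inr (Sum.inl ⟨ifin.1 + 1, hi⟩)} :
          Finset (StepPhi n m)),
          ({θ | (∀ x, θ x ≠ none ↔
                  x ∈ ({Sum.inr (Sum.inl ifin), Sum.inr (Sum.inl ⟨ifin.1 + 1, hi⟩)} :
                    Finset (StepPhi n m))) ∧
                (∀ x v, θ x = some v → v ∈ UboolFin n ∪ UstarFin n) ∧
                ∃ b₁ j₁ b₂ j₂,
                  θ (Sum.inr (Sum.inl ifin)) = some (Sum.inr (b₁, j₁)) ∧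
                  θ (Sum.inr (Sum.inl ⟨ifin.1 + 1, hi⟩)) = some (Sum.inr (b₂, j₂)) ∧
                  j₁ < j₂} : Set (StepPhi n m → Option UserPhi))) ∈ (WPhi n m φ).C :=
        Or.inl ⟨ifin, hi, rfl⟩
      have hval := hvalf.2 _ hc (fun s _ => htotf s)
      obtain ⟨-, -, b₁, j₁, b₂, j₂, e1, e2, hlt⟩ := hval
      have hmem1 : (Sum.inr (Sum.inl ifin) : StepPhi n m) ∈
          ({Sum.inr (Sum.inl ifin), Sum.inr (Sum.inl ⟨ifin.1 + 1, hi⟩)} :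
            Finset (StepPhi n m)) := by simp
      have hmem2 : (Sum.inr (Sum.inl ⟨ifin.1 + 1, hi⟩) : StepPhi n m) ∈
          ({Sum.inr (Sum.inl ifin), Sum.inr (Sum.inl ⟨ifin.1 + 1, hi⟩)} :
            Finset (StepPhi n m)) := by simp
      rw [show restrictTo θf _ (Sum.inr (Sum.inl ifin)) =
        θf (Sum.inr (Sum.inl ifin)) from if_pos hmem1, hJth ifin] at e1
      rw [show restrictTo θf _ (Sum.inr (Sum.inl ⟨ifin.1 + 1, hi⟩)) =
        θf (Sum.inr (Sum.inl ⟨ifin.1 + 1, hi⟩)) from if_pos hmem2,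
        hJth ⟨ifin.1 + 1, hi⟩] at e2
      have e1' := Option.some.inj e1
      have e2' := Option.some.inj e2
      simp only [Sum.inr.injEq, Prod.mk.injEq] at e1' e2'
      rw [e1'.2, e2'.2]
      exact hlt
    have hJmono : StrictMono J := strictMono_of_consec hmono
    set E : Finset ℕ := Finset.univ.image (fun i : Fin n => e i) with hE
    have hEcard : E.card = n := by
      rw [hE, Finset.card_image_of_injective _ hemono.injective]
      simp
    have hJE : ∀ i, J i ∈ E := by
      intro i
      have := hJK i
      rw [hK, Finset.mem_image] at this
      obtain ⟨i', -, hi'⟩ := this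
      simp only [Sum.inr.injEq, Prod.mk.injEq] at hi'
      rw [hE, Finset.mem_image]
      exact ⟨i', Finset.mem_univ _, hi'.2⟩
    have heE : ∀ i : Fin n, e i ∈ E := by
      intro i
      rw [hE, Finset.mem_image]
      exact ⟨i, Finset.mem_univ _, rfl⟩
    have hJe : J = e :=
      (Finset.orderEmbOfFin_unique hEcard hJE hJmono).trans
        (Finset.orderEmbOfFin_unique hEcard heE hemono).symm
    have hyv : yVal θf = y := by
      funext i
      have := hJth i
      rw [hJe] at this
      simp [yVal, this, heparity i]
    have hglob : ((Finset.univ : Finset (StepPhi n m)),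
        ({θ | (∀ x, θ x ≠ none) ∧
             (∀ x v, θ x = some v → v ∈ UboolFin n ∪ UstarFin n) ∧
             φ (xVal θ) (yVal θ) (zVal θ)} :
          Set (StepPhi n m → Option UserPhi))) ∈ (WPhi n m φ).C := Or.inr rfl
    have hval := hvalf.2 _ hglob (fun s _ => htotf s)
    obtain ⟨-, -, hφ⟩ := hval
    have hrt : restrictTo θf (Finset.univ : Finset (StepPhi n m)) = θf := by
      funext s
      exact if_pos (Finset.mem_univ s)
    rw [hrt] at hφ
    rw [hxv, hyv] at hφ
    exact ⟨zVal θf, hφ⟩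

end WPhiProof



/-- `W_φ` is one-shot resilient for budget `n` if and only
if there exists `x ∈ Bool^n` such that for all `y ∈ Bool^n` there exists
`z ∈ Bool^m` with `φ(x, y, z)`. -/
theorem WPhi_oneShot_resilient_iff
    (n m : ℕ) (hn : 1 ≤ n)
    (φ : (Fin n → Bool) → (Fin n → Bool) → (Fin m → Bool) → Prop) :
    (WPhi n m φ).OneShotResilient n ↔
      ∃ x : Fin n → Bool, ∀ y : Fin n → Bool, ∃ z : Fin m → Bool, φ x y z := by
  exact ⟨WPhiProof.exists_of_resilient hn, WPhiProof.resilient_of_exists⟩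
end

section
/- Let n ≥ 1 and k ≥ 2, and let G be a directed graph with vertex set Bool^n and edge relation E ⊆ Bool^n × Bool^n. Define φ ⊆ Bool^n × Bool^n × Bool^{n(k−1)} by: φ(x, y, (z¹, …, z^{k−1})) holds (where each zⁱ ∈ Bool^n) iff x = y, or (x, y) ∈ E, or there exists 1 ≤ i ≤ k−1 with (x, z¹) ∈ E, (z¹, z²) ∈ E, …, (z^{i−1}, zⁱ) ∈ E, and (zⁱ, y) ∈ E. Then the radius of G is at most k if and only if the workflow authorization policy W_φ is one-shot resilient for budget n. -/
section Paths

/-- `y` is reachable from `x` by a directed path (pairwise distinct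
vertices) of length at most `k` (every vertex is reachable from itself by a
path of length `0`). -/
def PathAtMost {V : Type} (E : V → V → Prop) (k : ℕ) (x y : V) : Prop :=
  ∃ l ≤ k, ∃ f : Fin (l + 1) → V, Function.Injective f ∧
    f 0 = x ∧ f (Fin.last l) = y ∧
    ∀ i : Fin l, E (f i.castSucc) (f i.succ)

/-- The radius of the directed graph `(V, E)` is at most `k`: some vertex
reaches every vertex by a directed path of length at most `k`. -/
def RadiusAtMost {V : Type} (E : V → V → Prop) (k : ℕ) : Prop :=
  ∃ u : V, ∀ v : V, PathAtMost E k u v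

end Paths
section Radius

/-- The `i`-th block `zⁱ⁺¹ ∈ Bool^n` of a vector `z ∈ Bool^{n(k−1)}`. -/
def zBlock {n k : ℕ} (z : Fin (n * (k - 1)) → Bool) (i : Fin (k - 1))
    (j : Fin n) : Bool :=
  z ⟨i.1 * n + j.1, by
      have h1 := i.isLt
      have h2 := j.isLt
      calc i.1 * n + j.1 < i.1 * n + n := by omega
        _ = (i.1 + 1) * n := by ring
        _ ≤ (k - 1) * n := Nat.mul_le_mul_right n h1
        _ = n * (k - 1) := Nat.mul_comm _ _⟩

/-- The predicate `φ` of the Σ₃ᵖ-hardness reduction: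
`φ(x, y, (z¹, …, z^{k−1}))` iff `x = y`, or `(x, y) ∈ E`, or there is
`1 ≤ i ≤ k−1` with `(x, z¹) ∈ E`, `(z¹, z²) ∈ E`, …, `(z^{i−1}, zⁱ) ∈ E`,
and `(zⁱ, y) ∈ E`. -/
def phiRad (n k : ℕ) (E : (Fin n → Bool) → (Fin n → Bool) → Prop) :
    (Fin n → Bool) → (Fin n → Bool) → (Fin (n * (k - 1)) → Bool) → Prop :=
  fun x y z => x = y ∨ E x y ∨
    ∃ i, ∃ h1 : 1 ≤ i, ∃ h2 : i ≤ k - 1,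
      E x (zBlock z ⟨0, by omega⟩) ∧
      (∀ j (hj : j + 1 < i),
        E (zBlock z ⟨j, by omega⟩) (zBlock z ⟨j + 1, by omega⟩)) ∧
      E (zBlock z ⟨i - 1, by omega⟩) y


section AuxGame

open WAP

theorem rankPhi_lt {n m : ℕ} (s : StepPhi n m) : rankPhi s < n + n + m := by
  rcases s with i | i | l
  · have := i.isLt; simp only [rankPhi]; omega
  · have := i.isLt; simp only [rankPhi]; omega
  · have := l.isLt; simp only [rankPhi]; omega

theorem rankPhi_inj {n m : ℕ} {s t : StepPhi n m} (h : rankPhi s = rankPhi t) : s = t := by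
  rcases s with i | i | l <;> rcases t with j | j | r <;>
    simp only [rankPhi] at h <;>
    first
    | (exact congrArg _ (Fin.ext h))
    | (exact congrArg _ (congrArg _ (Fin.ext (by omega))))
    | (exfalso; first
        | (have := i.isLt; omega)
        | (have := j.isLt; omega)
        | (have := l.isLt; omega)
        | (have := r.isLt; omega))

def stepOfRank (n m p : ℕ) (h : p < n + n + m) : StepPhi n m :=
  if h1 : p < n then Sum.inl ⟨p, h1⟩
  else if h2 : p < n + n then Sum.inr (Sum.inl ⟨p - n, by omega⟩)
  else Sum.inr (Sum.inr ⟨p - (n + n), by omega⟩)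

theorem rank_stepOfRank (n m p : ℕ) (h : p < n + n + m) :
    rankPhi (stepOfRank n m p h) = p := by
  unfold stepOfRank
  split_ifs with h1 h2 <;> simp only [rankPhi] <;> omega

/-- Restriction of a plan to the steps of rank `< p`. -/
def restrictR {n m : ℕ} (θ : StepPhi n m → Option UserPhi) (p : ℕ) :
    StepPhi n m → Option UserPhi :=
  fun s => if rankPhi s < p then θ s else none

variable {n m : ℕ} {φ : (Fin n → Bool) → (Fin n → Bool) → (Fin m → Bool) → Prop}

theorem restrictR_partialPlan {θf : StepPhi n m → Option UserPhi}
    (hpp : (WPhi n m φ).IsPartialPlan θf) (ht : ∀ s, θf s ≠ none) (p : ℕ) :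
    (WPhi n m φ).IsPartialPlan (restrictR θf p) := by
  constructor
  · intro s u hs
    simp only [restrictR] at hs
    split_ifs at hs with h
    exact hpp.1 s u hs
  · intro s₁ s₂ _ _ h1 h2 _
    simp only [restrictR] at h1 ⊢
    split_ifs at h1 with h
    · have hord : rankPhi s₂ ≤ rankPhi s₁ := h2
      rw [if_pos (lt_of_le_of_lt hord h)]
      exact ht s₂
    · exact absurd rfl h1

theorem restrictR_valid {θf : StepPhi n m → Option UserPhi}
    (hv : (WPhi n m φ).Valid θf) (ht : ∀ s, θf s ≠ none) (p : ℕ) :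
    (WPhi n m φ).Valid (restrictR θf p) := by
  constructor
  · intro s u hs
    simp only [restrictR] at hs
    split_ifs at hs with h
    exact hv.1 s u hs
  · intro c hc hdom
    have hsub : ∀ s ∈ c.1, rankPhi s < p := by
      intro s hs
      by_contra h
      exact hdom s hs (by simp [restrictR, if_neg h])
    have heq : restrictTo (restrictR θf p) c.1 = restrictTo θf c.1 := by
      funext s
      simp only [restrictTo, restrictR]
      split_ifs with h1 h2
      · rfl
      · exact absurd (hsub s h1) h2
      · rfl
    rw [heq]
    exact hv.2 c hc (fun s _ => ht s)

theorem restrictR_succ_eq_update {θf : StepPhi n m → Option UserPhi}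
    (p : ℕ) (hp : p < n + n + m) :
    restrictR θf (p + 1) =
      Function.update (restrictR θf p) (stepOfRank n m p hp) (θf (stepOfRank n m p hp)) := by
  funext s
  rcases eq_or_ne s (stepOfRank n m p hp) with rfl | hne
  · rw [Function.update_self]
    simp [restrictR, rank_stepOfRank]
  · rw [Function.update_of_ne hne]
    simp only [restrictR]
    have hr : rankPhi s ≠ p := fun h => by
      apply hne
      apply rankPhi_inj
      rw [h, rank_stepOfRank]
    by_cases h : rankPhi s < p
    · rw [if_pos h, if_pos (by omega)]
    · rw [if_neg h, if_neg (by omega)]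

theorem p1move_restrictR {θf : StepPhi n m → Option UserPhi}
    (hvp : (WPhi n m φ).IsValidPlan θf) {Δ : Finset UserPhi}
    {p : ℕ} (hp : p < n + n + m) {u : UserPhi}
    (hu : θf (stepOfRank n m p hp) = some u) (huΔ : u ∉ Δ) :
    (WPhi n m φ).P1Move Δ (restrictR θf p) (restrictR θf (p + 1)) := by
  have ht : ∀ s, θf s ≠ none := fun s => hvp.1.2 s (Finset.mem_univ s)
  refine ⟨stepOfRank n m p hp, u, Finset.mem_univ _, ?_, (hvp.1.1.1 _ _ hu).2, huΔ, ?_, ?_, ?_⟩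
  · simp [restrictR, rank_stepOfRank]
  · rw [restrictR_succ_eq_update p hp, hu]
  · exact restrictR_partialPlan hvp.1.1 ht _
  · exact restrictR_valid hvp.2 ht _

theorem winsAfterStrike (t : ℕ) {θf : StepPhi n m → Option UserPhi}
    (hvp : (WPhi n m φ).IsValidPlan θf) (Δ : Finset UserPhi) :
    ∀ q p, p + q = n + n + m →
      (∀ s u, θf s = some u → p ≤ rankPhi s → u ∉ Δ) →
      (WPhi n m φ).OneShotWins t q Δ (restrictR θf p) true := by
  have ht : ∀ s, θf s ≠ none := fun s => hvp.1.2 s (Finset.mem_univ s)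
  intro q
  induction q with
  | zero =>
    intro p hp havoid
    refine ⟨?_, restrictR_partialPlan hvp.1.1 ht _, restrictR_valid hvp.2 ht _⟩
    intro s _
    have hlt : rankPhi s < p := by have := rankPhi_lt s; omega
    simpa [restrictR, if_pos hlt] using ht s
  | succ q ih =>
    intro p hp havoid
    have hpN : p < n + n + m := by omega
    right
    constructor
    · exact ⟨stepOfRank n m p hpN, Finset.mem_univ _, by simp [restrictR, rank_stepOfRank]⟩
    · intro Δ' struck' hmove
      rcases hmove with ⟨rfl, rfl⟩ | ⟨h, _⟩
      · obtain ⟨u, hu⟩ := Option.ne_none_iff_exists'.mp (ht (stepOfRank n m p hpN))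
        refine ⟨restrictR θf (p + 1),
          p1move_restrictR hvp hpN hu
            (havoid _ _ hu (by rw [rank_stepOfRank])), ?_⟩
        exact ih (p + 1) (by omega) (fun s u h1 h2 => havoid s u h1 (by omega))
      · cases h

end AuxGame


section AuxStrategy

open WAP

theorem mem_UboolFin {n : ℕ} {b : Bool} {idx : ℕ} :
    (Sum.inl (b, idx) : UserPhi) ∈ UboolFin n ↔ 1 ≤ idx ∧ idx ≤ n + 1 := by
  simp only [UboolFin, Finset.mem_image, Finset.mem_product, Finset.mem_Icc,
    Finset.mem_insert, Finset.mem_singleton]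
  constructor
  · rintro ⟨⟨b', idx'⟩, ⟨_, h1, h2⟩, heq⟩
    obtain ⟨rfl, rfl⟩ : b' = b ∧ idx' = idx := by
      injection heq with h; exact ⟨congrArg Prod.fst h, congrArg Prod.snd h⟩
    exact ⟨h1, h2⟩
  · rintro ⟨h1, h2⟩
    exact ⟨(b, idx), ⟨by cases b <;> simp, h1, h2⟩, rfl⟩

theorem mem_UstarFin {n : ℕ} {b : Bool} {j : ℕ} :
    (Sum.inr (b, j) : UserPhi) ∈ UstarFin n ↔
      1 ≤ j ∧ j ≤ 2 * n ∧ b = decide (j % 2 = 0) := by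
  simp only [UstarFin, Finset.mem_image, Finset.mem_Icc]
  constructor
  · rintro ⟨a, ⟨h1, h2⟩, heq⟩
    obtain ⟨hb, rfl⟩ : decide (a % 2 = 0) = b ∧ a = j := by
      injection heq with h; exact ⟨congrArg Prod.fst h, congrArg Prod.snd h⟩
    exact ⟨h1, h2, hb.symm⟩
  · rintro ⟨h1, h2, rfl⟩
    exact ⟨j, ⟨h1, h2⟩, rfl⟩

/-- The canonical `y`-vector (the one played by Player 1 before any strike). -/
def y0 (n : ℕ) : Fin n → Bool := fun i => decide ((i.1 + 1) % 2 = 0)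

/-- A total plan of `W_φ`, parametrized by the boolean values and indices used. -/
def thetaFull {n m : ℕ} (x₀ : Fin n → Bool) (xi : Fin n → ℕ) (η : Fin n → Bool)
    (J : Fin n → ℕ) (zv : Fin m → Bool) (zi : Fin m → ℕ) : StepPhi n m → Option UserPhi
  | Sum.inl i => some (Sum.inl (x₀ i, xi i))
  | Sum.inr (Sum.inl i) => some (Sum.inr (η i, J i))
  | Sum.inr (Sum.inr l) => some (Sum.inl (zv l, zi l))

/-- The canonical plan of Player 1. -/
def thetaCan {n m : ℕ} (x₀ : Fin n → Bool) (z₀ : Fin m → Bool) : StepPhi n m → Option UserPhi :=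
  thetaFull x₀ (fun _ => 1) (y0 n) (fun i => i.1 + 1) z₀ (fun _ => 1)

theorem thetaFull_total {n m : ℕ} {x₀ : Fin n → Bool} {xi : Fin n → ℕ} {η : Fin n → Bool}
    {J : Fin n → ℕ} {zv : Fin m → Bool} {zi : Fin m → ℕ} (s : StepPhi n m) :
    thetaFull x₀ xi η J zv zi s ≠ none := by
  rcases s with i | i | l <;> simp [thetaFull]

theorem thetaFull_validPlan {n m : ℕ}
    {φ : (Fin n → Bool) → (Fin n → Bool) → (Fin m → Bool) → Prop}
    (x₀ : Fin n → Bool) (xi : Fin n → ℕ) (η : Fin n → Bool) (J : Fin n → ℕ)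
    (zv : Fin m → Bool) (zi : Fin m → ℕ)
    (hxi : ∀ i, 1 ≤ xi i ∧ xi i ≤ n + 1)
    (hzi : ∀ l, 1 ≤ zi l ∧ zi l ≤ n + 1)
    (hJ1 : ∀ i, 1 ≤ J i) (hJ2 : ∀ i, J i ≤ 2 * n)
    (hη : ∀ i, η i = decide (J i % 2 = 0))
    (hJmono : ∀ i i' : Fin n, i.1 < i'.1 → J i < J i')
    (hφ : φ x₀ η zv) :
    (WPhi n m φ).IsValidPlan (thetaFull x₀ xi η J zv zi) := by
  have hvals : ∀ s u, thetaFull x₀ xi η J zv zi s = some u →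
      u ∈ UboolFin n ∪ UstarFin n := by
    intro s u h
    rcases s with i | i | l
    · obtain rfl := Option.some.inj h
      exact Finset.mem_union_left _ (mem_UboolFin.mpr ⟨(hxi i).1, (hxi i).2⟩)
    · obtain rfl := Option.some.inj h
      exact Finset.mem_union_right _ (mem_UstarFin.mpr ⟨hJ1 i, hJ2 i, hη i⟩)
    · obtain rfl := Option.some.inj h
      exact Finset.mem_union_left _ (mem_UboolFin.mpr ⟨(hzi l).1, (hzi l).2⟩)
  refine ⟨⟨⟨fun s u h => ⟨Finset.mem_univ s, hvals s u h⟩,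
      fun s₁ s₂ _ _ _ _ _ => thetaFull_total s₂⟩,
      fun s _ => thetaFull_total s⟩, ?_, ?_⟩
  · -- authorization
    intro s u h
    rcases s with i | i | l
    · obtain rfl := Option.some.inj h
      exact mem_UboolFin.mpr ⟨(hxi i).1, (hxi i).2⟩
    · obtain rfl := Option.some.inj h
      exact mem_UstarFin.mpr ⟨hJ1 i, hJ2 i, hη i⟩
    · obtain rfl := Option.some.inj h
      exact mem_UboolFin.mpr ⟨(hzi l).1, (hzi l).2⟩
  · -- constraints
    intro c hc _
    rcases hc with hc | hc
    · obtain ⟨i, hi, rfl⟩ := hc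
      refine ⟨?_, ?_, η i, J i, η ⟨i.1 + 1, hi⟩, J ⟨i.1 + 1, hi⟩, ?_, ?_,
        hJmono i ⟨i.1 + 1, hi⟩ (by simp)⟩
      · intro x
        by_cases h : x ∈ ({Sum.inr (Sum.inl i), Sum.inr (Sum.inl ⟨i.1 + 1, hi⟩)} :
            Finset (StepPhi n m))
        · simp only [restrictTo, if_pos h]
          exact iff_of_true (thetaFull_total x) h
        · simp only [restrictTo, if_neg h]
          exact iff_of_false (by simp) h
      · intro x v hxv
        simp only [restrictTo] at hxv
        split_ifs at hxv
        exact hvals x v hxv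
      · simp only [restrictTo, if_pos (Finset.mem_insert_self _ _)]
        rfl
      · simp only [restrictTo,
          if_pos (Finset.mem_insert_of_mem (Finset.mem_singleton_self _))]
        rfl
    · obtain rfl := hc
      have hre : restrictTo (thetaFull x₀ xi η J zv zi) Finset.univ =
          thetaFull x₀ xi η J zv zi := by
        funext s; simp [restrictTo]
      show restrictTo (thetaFull x₀ xi η J zv zi) Finset.univ ∈ _
      rw [hre]
      refine ⟨fun x => thetaFull_total x, fun x v h => hvals x v h, ?_⟩
      have h1 : xVal (thetaFull x₀ xi η J zv zi) = x₀ := funext fun i => rfl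
      have h2 : yVal (thetaFull x₀ xi η J zv zi) = η := funext fun i => rfl
      have h3 : zVal (thetaFull x₀ xi η J zv zi) = zv := funext fun l => rfl
      rw [h1, h2, h3]
      exact hφ

theorem completability {n m : ℕ}
    {φ : (Fin n → Bool) → (Fin n → Bool) → (Fin m → Bool) → Prop}
    (hn : 1 ≤ n) (x₀ : Fin n → Bool)
    (zfun : (Fin n → Bool) → (Fin m → Bool)) (hzf : ∀ y, φ x₀ y (zfun y))
    (p : ℕ) (Δ : Finset UserPhi) (hΔ : Δ.card ≤ n) :
    ∃ θf, (WPhi n m φ).IsValidPlan θf ∧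
      (∀ s, rankPhi s < p → θf s = thetaCan x₀ (zfun (y0 n)) s) ∧
      (∀ s u, θf s = some u → p ≤ rankPhi s → u ∉ Δ) := by
  classical
  -- a boolean user avoiding Δ, for each boolean value
  have hpick : ∀ b : Bool, ∃ idx, 1 ≤ idx ∧ idx ≤ n + 1 ∧
      (Sum.inl (b, idx) : UserPhi) ∉ Δ := by
    intro b
    by_contra hcon
    push_neg at hcon
    have hsub : ((Finset.Icc 1 (n + 1)).image
        (fun idx => (Sum.inl (b, idx) : UserPhi))) ⊆ Δ := by
      intro u hu
      simp only [Finset.mem_image, Finset.mem_Icc] at hu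
      obtain ⟨idx, ⟨h1, h2⟩, rfl⟩ := hu
      exact hcon idx h1 h2
    have hcard : ((Finset.Icc 1 (n + 1)).image
        (fun idx => (Sum.inl (b, idx) : UserPhi))).card = n + 1 := by
      rw [Finset.card_image_of_injective _ (fun a a' h => by simpa using h)]
      simp [Nat.card_Icc]
    have := Finset.card_le_card hsub
    omega
  set pick : Bool → ℕ := fun b => (hpick b).choose with hpickdef
  have hpickspec : ∀ b, 1 ≤ pick b ∧ pick b ≤ n + 1 ∧
      (Sum.inl (b, pick b) : UserPhi) ∉ Δ := fun b => (hpick b).choose_spec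
  set p' := min n (p - n) with hp'def
  have hp'n : p' ≤ n := min_le_left _ _
  have hp'p : p' ≤ p - n := min_le_right _ _
  set A := (Finset.Icc (p' + 1) (2 * n)).filter
      (fun j => (Sum.inr (decide (j % 2 = 0), j) : UserPhi) ∉ Δ) with hAdef
  have hAcard : n - p' ≤ A.card := by
    have h1 : ((Finset.Icc (p' + 1) (2 * n)).filter
        (fun j => (Sum.inr (decide (j % 2 = 0), j) : UserPhi) ∈ Δ)).card ≤ Δ.card := by
      apply Finset.card_le_card_of_injOn
        (fun j => (Sum.inr (decide (j % 2 = 0), j) : UserPhi))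
      · intro j hj; exact (Finset.mem_filter.mp hj).2
      · intro a _ b _ h
        injection h with h'
        exact congrArg Prod.snd h'
    have h2 := Finset.card_filter_add_card_filter_not
      (s := Finset.Icc (p' + 1) (2 * n))
      (p := fun j => (Sum.inr (decide (j % 2 = 0), j) : UserPhi) ∈ Δ)
    have h3 : (Finset.Icc (p' + 1) (2 * n)).card = 2 * n - p' := by
      rw [Nat.card_Icc]; omega
    rw [h3] at h2
    have : A.card = ((Finset.Icc (p' + 1) (2 * n)).filter
        (fun j => ¬ (Sum.inr (decide (j % 2 = 0), j) : UserPhi) ∈ Δ)).card := rfl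
    omega
  obtain ⟨B, hBA, hBcard⟩ := Finset.exists_subset_card_eq hAcard
  set emb := B.orderEmbOfFin hBcard with hembdef
  have hembmem : ∀ idx : Fin (n - p'), emb idx ∈ A :=
    fun idx => hBA (B.orderEmbOfFin_mem hBcard idx)
  have hembIcc : ∀ idx, p' + 1 ≤ emb idx ∧ emb idx ≤ 2 * n :=
    fun idx => Finset.mem_Icc.mp (Finset.mem_filter.mp (hembmem idx)).1
  have hembΔ : ∀ idx, (Sum.inr (decide (emb idx % 2 = 0), emb idx) : UserPhi) ∉ Δ :=
    fun idx => (Finset.mem_filter.mp (hembmem idx)).2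
  have hd : ∀ i : Fin n, ¬ i.1 < p' → i.1 - p' < n - p' :=
    fun i h => by have := i.isLt; omega
  set J : Fin n → ℕ := fun i =>
    if h : i.1 < p' then i.1 + 1 else emb ⟨i.1 - p', hd i h⟩ with hJdef
  have hJ1 : ∀ i, 1 ≤ J i := by
    intro i
    simp only [hJdef]
    split_ifs with h
    · omega
    · exact le_trans (by omega : (1:ℕ) ≤ p' + 1) (hembIcc _).1
  have hJ2 : ∀ i, J i ≤ 2 * n := by
    intro i
    simp only [hJdef]
    split_ifs with h
    · omega
    · exact (hembIcc _).2
  have hJmono : ∀ i i' : Fin n, i.1 < i'.1 → J i < J i' := by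
    intro i i' hlt
    simp only [hJdef]
    split_ifs with ha hb hc
    · omega
    · exact lt_of_lt_of_le (by omega) (hembIcc _).1
    · omega
    · apply (OrderEmbedding.strictMono emb)
      simp only [Fin.mk_lt_mk]
      omega
  set η : Fin n → Bool := fun i => decide (J i % 2 = 0) with hηdef
  set zv : Fin m → Bool := fun l =>
    if n + n + l.1 < p then zfun (y0 n) l else zfun η l with hzvdef
  set xi : Fin n → ℕ := fun i => if i.1 < p then 1 else pick (x₀ i) with hxidef
  set zi : Fin m → ℕ := fun l =>
    if n + n + l.1 < p then 1 else pick (zv l) with hzidef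
  have hφ : φ x₀ η zv := by
    by_cases hp2 : p ≤ n + n
    · have hzv : zv = zfun η := by
        funext l
        simp only [hzvdef]
        rw [if_neg (by omega)]
      rw [hzv]; exact hzf η
    · have hp'' : p' = n := by rw [hp'def]; exact min_eq_left (by omega)
      have hη : η = y0 n := by
        funext i
        have hJi : J i = i.1 + 1 := by
          simp only [hJdef]
          rw [dif_pos (show i.1 < p' by have := i.isLt; omega)]
        simp only [hηdef]
        rw [hJi]
        rfl
      have hzv : zv = zfun (y0 n) := by
        funext l
        simp only [hzvdef]
        split_ifs with h
        · rfl
        · exact congrFun (congrArg zfun hη) l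
      rw [hzv, hη]
      exact hzf (y0 n)
  refine ⟨thetaFull x₀ xi η J zv zi, ?_, ?_, ?_⟩
  · refine thetaFull_validPlan x₀ xi η J zv zi ?_ ?_ hJ1 hJ2 (fun i => rfl) hJmono hφ
    · intro i
      simp only [hxidef]
      split_ifs with h
      · omega
      · exact ⟨(hpickspec _).1, (hpickspec _).2.1⟩
    · intro l
      simp only [hzidef]
      split_ifs with h
      · omega
      · exact ⟨(hpickspec _).1, (hpickspec _).2.1⟩
  · -- extension
    intro s hs
    rcases s with i | i | l
    · simp only [rankPhi] at hs
      simp only [thetaFull, thetaCan, hxidef]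
      rw [if_pos hs]
    · simp only [rankPhi] at hs
      have hip' : i.1 < p' := by have := i.isLt; omega
      have hJi : J i = i.1 + 1 := by simp only [hJdef]; rw [dif_pos hip']
      have hηi : η i = y0 n i := by
        simp only [hηdef]; rw [hJi]; rfl
      simp only [thetaFull, thetaCan]
      rw [hJi, hηi]
    · simp only [rankPhi] at hs
      simp only [thetaFull, thetaCan, hzvdef, hzidef]
      rw [if_pos hs, if_pos hs]
  · -- avoidance
    intro s u hsu hrank
    rcases s with i | i | l
    · simp only [rankPhi] at hrank
      simp only [thetaFull] at hsu
      obtain rfl := Option.some.inj hsu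
      have : xi i = pick (x₀ i) := by simp only [hxidef]; rw [if_neg (by omega)]
      rw [this]
      exact (hpickspec _).2.2
    · simp only [rankPhi] at hrank
      simp only [thetaFull] at hsu
      obtain rfl := Option.some.inj hsu
      have hnip' : ¬ i.1 < p' := by omega
      have hJi : J i = emb ⟨i.1 - p', hd i hnip'⟩ := by
        simp only [hJdef]; rw [dif_neg hnip']
      have hηi : η i = decide (J i % 2 = 0) := rfl
      rw [hηi, hJi]
      exact hembΔ _
    · simp only [rankPhi] at hrank
      simp only [thetaFull] at hsu
      obtain rfl := Option.some.inj hsu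
      have : zi l = pick (zv l) := by simp only [hzidef]; rw [if_neg (by omega)]
      rw [this]
      exact (hpickspec _).2.2

end AuxStrategy


section AuxForward

open WAP

theorem winsBeforeStrike {n m : ℕ}
    {φ : (Fin n → Bool) → (Fin n → Bool) → (Fin m → Bool) → Prop}
    (hn : 1 ≤ n) (x₀ : Fin n → Bool)
    (zfun : (Fin n → Bool) → (Fin m → Bool)) (hzf : ∀ y, φ x₀ y (zfun y)) :
    ∀ q p, p + q = n + n + m →
      (WPhi n m φ).OneShotWins n q ∅ (restrictR (thetaCan x₀ (zfun (y0 n))) p) false := by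
  have hcan : (WPhi n m φ).IsValidPlan (thetaCan x₀ (zfun (y0 n))) := by
    obtain ⟨θf, hθf, hext, _⟩ :=
      completability hn x₀ zfun hzf (n + n + m) ∅ (by simp)
    have heq : θf = thetaCan x₀ (zfun (y0 n)) :=
      funext fun s => hext s (rankPhi_lt s)
    rwa [heq] at hθf
  have htot : ∀ s, thetaCan x₀ (zfun (y0 n)) s ≠ none :=
    fun s => hcan.1.2 s (Finset.mem_univ s)
  intro q
  induction q with
  | zero =>
    intro p hp
    refine ⟨?_, restrictR_partialPlan hcan.1.1 htot _, restrictR_valid hcan.2 htot _⟩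
    intro s _
    have hlt : rankPhi s < p := by have := rankPhi_lt s; omega
    simpa [restrictR, if_pos hlt] using htot s
  | succ q ih =>
    intro p hp
    have hpN : p < n + n + m := by omega
    right
    refine ⟨⟨stepOfRank n m p hpN, Finset.mem_univ _,
      by simp [restrictR, rank_stepOfRank]⟩, ?_⟩
    intro Δ' struck' hmove
    rcases hmove with ⟨rfl, rfl⟩ | ⟨_, rfl, _, hsub, hcard⟩
    · -- pass
      obtain ⟨u, hu⟩ := Option.ne_none_iff_exists'.mp (htot (stepOfRank n m p hpN))
      exact ⟨restrictR (thetaCan x₀ (zfun (y0 n))) (p + 1),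
        p1move_restrictR hcan hpN hu (Finset.notMem_empty u), ih (p + 1) (by omega)⟩
    · -- strike
      have hΔ'card : Δ'.card ≤ n := by simpa using hcard
      obtain ⟨θg, hθg, hgext, hgavoid⟩ := completability hn x₀ zfun hzf p Δ' hΔ'card
      have hres : restrictR θg p = restrictR (thetaCan x₀ (zfun (y0 n))) p := by
        funext s
        simp only [restrictR]
        split_ifs with h
        · exact hgext s h
        · rfl
      obtain ⟨u, hu⟩ := Option.ne_none_iff_exists'.mp
        (hθg.1.2 (stepOfRank n m p hpN) (Finset.mem_univ _))
      refine ⟨restrictR θg (p + 1), ?_, ?_⟩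
      · rw [← hres]
        exact p1move_restrictR hθg hpN hu (hgavoid _ _ hu (by rw [rank_stepOfRank]))
      · exact winsAfterStrike n hθg Δ' q (p + 1) (by omega)
          (fun s u' h1 h2 => hgavoid s u' h1 (by omega))

theorem WPhi_card {n m : ℕ}
    {φ : (Fin n → Bool) → (Fin n → Bool) → (Fin m → Bool) → Prop} :
    (WPhi n m φ).S.card = n + n + m := by
  show (Finset.univ : Finset (StepPhi n m)).card = n + n + m
  rw [Finset.card_univ]
  simp [Fintype.card_sum, Fintype.card_fin]
  omega

theorem forward_resilient {n m : ℕ}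
    {φ : (Fin n → Bool) → (Fin n → Bool) → (Fin m → Bool) → Prop}
    (hn : 1 ≤ n) (Hsat : ∃ x₀ : Fin n → Bool, ∀ y, ∃ z, φ x₀ y z) :
    (WPhi n m φ).OneShotResilient n := by
  obtain ⟨x₀, H⟩ := Hsat
  have key := winsBeforeStrike hn x₀ (fun y => (H y).choose)
    (fun y => (H y).choose_spec) (n + n + m) 0 (by omega)
  have h0 : restrictR (thetaCan x₀ ((fun y => (H y).choose) (y0 n))) 0 =
      (fun _ => none) := by
    funext s
    simp [restrictR]
  rw [h0] at key
  show (WPhi n m φ).OneShotWins n (WPhi n m φ).S.card ∅ (fun _ => none) false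
  rw [WPhi_card]
  exact key

end AuxForward


section AuxConverse

open WAP

variable {n m : ℕ} {φ : (Fin n → Bool) → (Fin n → Bool) → (Fin m → Bool) → Prop}

theorem forced_move {Δ : Finset UserPhi} {θ θ' : StepPhi n m → Option UserPhi} {p : ℕ}
    (hdom : ∀ s, θ s ≠ none ↔ rankPhi s < p)
    (hmv : (WPhi n m φ).P1Move Δ θ θ') :
    p < n + n + m ∧
    (∀ s, θ' s ≠ none ↔ rankPhi s < p + 1) ∧
    (∀ s, rankPhi s < p → θ' s = θ s) ∧
    (∃ u, u ∉ Δ ∧ ∀ s, rankPhi s = p → θ' s = some u) := by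
  obtain ⟨s, u, _, hsnone, _, huΔ, hupd, hpp', _⟩ := hmv
  have hps : ¬ rankPhi s < p := fun h => (hdom s).mpr h hsnone
  have hrs : rankPhi s = p := by
    by_contra hne
    have hlt : p < rankPhi s := by omega
    have hpN : p < n + n + m := lt_trans hlt (rankPhi_lt s)
    have h2 : θ (stepOfRank n m p hpN) = none := by
      by_contra hne2
      have := (hdom _).mp hne2
      rw [rank_stepOfRank] at this
      omega
    have hord : (WPhi n m φ).ord (stepOfRank n m p hpN) s := by
      show rankPhi (stepOfRank n m p hpN) ≤ rankPhi s
      rw [rank_stepOfRank]; omega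
    have hnes : stepOfRank n m p hpN ≠ s := by
      intro he
      apply hne
      rw [← he, rank_stepOfRank]
    have hcl := hpp'.2 s (stepOfRank n m p hpN) (Finset.mem_univ _) (Finset.mem_univ _)
      (by rw [hupd]; simp) hord hnes
    apply hcl
    rw [hupd, Function.update_of_ne hnes]
    exact h2
  have hpN : p < n + n + m := hrs ▸ rankPhi_lt s
  refine ⟨hpN, ?_, ?_, u, huΔ, ?_⟩
  · intro s'
    rcases eq_or_ne s' s with rfl | hne
    · rw [hupd]
      simp only [Function.update_self]
      exact iff_of_true (by simp) (by omega)
    · rw [hupd, Function.update_of_ne hne, hdom s']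
      have : rankPhi s' ≠ p := fun h => hne (rankPhi_inj (by rw [h, hrs]))
      omega
  · intro s' h
    rw [hupd]
    exact Function.update_of_ne (fun he => by rw [he, hrs] at h; omega) _ _
  · intro s' hs'
    have he : s' = s := rankPhi_inj (by rw [hs', hrs])
    rw [he, hupd]
    simp

theorem extract_after_strike (t : ℕ) (Δ : Finset UserPhi) :
    ∀ q p θ, p + q = n + n + m →
      (∀ s, θ s ≠ none ↔ rankPhi s < p) →
      (WPhi n m φ).OneShotWins t q Δ θ true →
      ∃ θf, (WPhi n m φ).IsValidPlan θf ∧ (∀ s, rankPhi s < p → θf s = θ s) ∧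
        (∀ s u, θf s = some u → p ≤ rankPhi s → u ∉ Δ) := by
  intro q
  induction q with
  | zero =>
    intro p θ hp hdom hw
    exact ⟨θ, ⟨⟨hw.2.1, hw.1⟩, hw.2.2⟩, fun s _ => rfl,
      fun s u hsu hps => absurd (rankPhi_lt s) (by omega)⟩
  | succ q ih =>
    intro p θ hp hdom hw
    rcases hw with hw | ⟨_, hnext⟩
    · refine ⟨θ, ⟨⟨hw.2.1, hw.1⟩, hw.2.2⟩, fun s _ => rfl, ?_⟩
      intro s u hsu hps
      have := (hdom s).mp (by rw [hsu]; simp)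
      exact absurd this (by omega)
    · obtain ⟨θ', hmv, hw'⟩ := hnext Δ true (Or.inl ⟨rfl, rfl⟩)
      obtain ⟨hpN, hdom', hext, u, huΔ, hu⟩ := forced_move hdom hmv
      obtain ⟨θf, hvf, hfe, hfa⟩ := ih (p + 1) θ' (by omega) hdom' hw'
      refine ⟨θf, hvf, ?_, ?_⟩
      · intro s hs
        rw [hfe s (by omega), hext s hs]
      · intro s u' hsu' hps
        rcases eq_or_lt_of_le hps with heq | hlt
        · have h1 := hu s heq.symm
          have h2 := hfe s (by omega)
          rw [h2, h1] at hsu'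
          obtain rfl := Option.some.inj hsu'
          exact huΔ
        · exact hfa s u' hsu' (by omega)

theorem iterate_pass (t : ℕ) :
    ∀ (j p : ℕ) θ, p + j ≤ n + n + m →
      (∀ s, θ s ≠ none ↔ rankPhi s < p) →
      (WPhi n m φ).OneShotWins t (n + n + m - p) ∅ θ false →
      ∃ θ', (∀ s, θ' s ≠ none ↔ rankPhi s < p + j) ∧
        (∀ s, rankPhi s < p → θ' s = θ s) ∧
        (WPhi n m φ).OneShotWins t (n + n + m - (p + j)) ∅ θ' false := by
  intro j
  induction j with
  | zero =>
    intro p θ _ hdom hw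
    exact ⟨θ, hdom, fun s _ => rfl, hw⟩
  | succ j ih =>
    intro p θ hpj hdom hw
    have hpN : p < n + n + m := by omega
    rw [show p + (j + 1) = (p + 1) + j from by omega]
    rw [show n + n + m - p = (n + n + m - (p + 1)) + 1 from by omega] at hw
    rcases hw with hw | ⟨_, hnext⟩
    · have := (hdom _).mp (hw.1 (stepOfRank n m p hpN) (Finset.mem_univ _))
      rw [rank_stepOfRank] at this
      exact absurd this (lt_irrefl p)
    · obtain ⟨θ', hmv, hw'⟩ := hnext ∅ false (Or.inl ⟨rfl, rfl⟩)
      obtain ⟨_, hdom', hext, _⟩ := forced_move hdom hmv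
      obtain ⟨θ'', hdom'', hext'', hw''⟩ := ih (p + 1) θ' (by omega) hdom' hw'
      exact ⟨θ'', hdom'', fun s hs => by rw [hext'' s (by omega), hext s hs], hw''⟩

theorem squeeze_fin (P : Fin n → ℕ) (hmono : ∀ i i' : Fin n, i.1 < i'.1 → P i < P i')
    (h1 : ∀ i, 1 ≤ P i) (h2 : ∀ i, P i ≤ n) : ∀ i, P i = i.1 + 1 := by
  have hlow : ∀ d, ∀ i : Fin n, i.1 = d → d + 1 ≤ P i := by
    intro d
    induction d with
    | zero => intro i _; exact h1 i
    | succ d ihd =>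
      intro i hi
      have hdn : d < n := by have := i.isLt; omega
      have hprev := ihd ⟨d, hdn⟩ rfl
      have := hmono ⟨d, hdn⟩ i (by simp [hi])
      omega
  have hhigh : ∀ d, ∀ i : Fin n, i.1 + d = n - 1 → P i + d ≤ n := by
    intro d
    induction d with
    | zero => intro i _; have := h2 i; omega
    | succ d ihd =>
      intro i hi
      have hin : i.1 + 1 < n := by have := i.isLt; omega
      have h3 := hmono i ⟨i.1 + 1, hin⟩ (by simp)
      have h4 := ihd ⟨i.1 + 1, hin⟩ (by simp; omega)
      omega
  intro i
  have hl := hlow i.1 i rfl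
  have hh := hhigh (n - 1 - i.1) i (by have := i.isLt; omega)
  omega

theorem extract_sat (hn : 1 ≤ n) (hres : (WPhi n m φ).OneShotResilient n) :
    ∃ x₀ : Fin n → Bool, ∀ y, ∃ z, φ x₀ y z := by
  classical
  have hw0 : (WPhi n m φ).OneShotWins n (n + n + m - 0) ∅ (fun _ => none) false := by
    have h := hres
    show (WPhi n m φ).OneShotWins n (n + n + m - 0) ∅ (fun _ => none) false
    rw [Nat.sub_zero, ← WPhi_card (φ := φ)]
    exact h
  obtain ⟨θx, hdomx, _, hwx⟩ := iterate_pass n n 0 (fun _ => none) (by omega)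
    (fun s => by simp) hw0
  simp only [Nat.zero_add] at hdomx hwx
  refine ⟨xVal θx, ?_⟩
  intro y
  set Δy : Finset UserPhi := Finset.univ.image
    (fun i : Fin n => (Sum.inr (!(y i), if y i then 2 * i.1 + 1 else 2 * i.1 + 2) : UserPhi))
    with hΔydef
  have hstruck : ∀ i : Fin n,
      (Sum.inr (!(y i), if y i then 2 * i.1 + 1 else 2 * i.1 + 2) : UserPhi) ∈ Δy :=
    fun i => Finset.mem_image_of_mem _ (Finset.mem_univ i)
  have hΔsub : Δy ⊆ (WPhi n m φ).U := by
    intro u hu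
    simp only [hΔydef, Finset.mem_image, Finset.mem_univ, true_and] at hu
    obtain ⟨i, rfl⟩ := hu
    apply Finset.mem_union_right
    apply mem_UstarFin.mpr
    have hin := i.isLt
    cases hyi : y i
    · simp only [hyi, Bool.not_false, Bool.false_eq_true, if_false]
      refine ⟨by omega, by omega, ?_⟩
      have h22 : (2 * i.1 + 2) % 2 = 0 := by omega
      rw [h22]
      rfl
    · simp only [hyi, Bool.not_true, eq_self_iff_true, if_true]
      refine ⟨by omega, by omega, ?_⟩
      have h21 : (2 * i.1 + 1) % 2 = 1 := by omega
      rw [h21]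
      rfl
  have hΔcard : Δy.card ≤ n := le_trans Finset.card_image_le (by simp)
  rw [show n + n + m - n = (n + m - 1) + 1 from by omega] at hwx
  rcases hwx with hcomp | ⟨_, hnext⟩
  · have := (hdomx _).mp (hcomp.1 (stepOfRank n m n (by omega)) (Finset.mem_univ _))
    rw [rank_stepOfRank] at this
    exact absurd this (lt_irrefl n)
  · obtain ⟨θ', hmv, hw'⟩ := hnext Δy true
      (Or.inr ⟨rfl, rfl, Finset.empty_subset _, hΔsub, by simpa using hΔcard⟩)
    obtain ⟨_, hdom', hext', u0, hu0Δ, hu0⟩ := forced_move hdomx hmv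
    obtain ⟨θf, hvf, hfe, hfa⟩ := extract_after_strike n Δy (n + m - 1) (n + 1) θ'
      (by omega) hdom' hw'
    have htotf : ∀ s, θf s ≠ none := fun s => hvf.1.2 s (Finset.mem_univ s)
    -- every y-step is assigned a U_star user outside Δy
    have hyassigned : ∀ i : Fin n, ∃ bb jj,
        θf (Sum.inr (Sum.inl i)) = some (Sum.inr (bb, jj)) ∧ 1 ≤ jj ∧ jj ≤ 2 * n ∧
        bb = decide (jj % 2 = 0) ∧ (Sum.inr (bb, jj) : UserPhi) ∉ Δy := by
      intro i
      obtain ⟨u, hu⟩ := Option.ne_none_iff_exists'.mp (htotf (Sum.inr (Sum.inl i)))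
      have hauth := hvf.2.1 _ u hu
      have hustar : u ∈ UstarFin n := hauth
      simp only [UstarFin, Finset.mem_image, Finset.mem_Icc] at hustar
      obtain ⟨jj, ⟨hj1, hj2⟩, rfl⟩ := hustar
      refine ⟨_, jj, hu, hj1, hj2, rfl, ?_⟩
      rcases Nat.eq_zero_or_pos i.1 with h0 | hpos
      · -- the step assigned in the strike round
        have hr : rankPhi (Sum.inr (Sum.inl i) : StepPhi n m) = n := by
          simp [rankPhi, h0]
        have h1 := hu0 _ hr
        have h2 := hfe (Sum.inr (Sum.inl i)) (by rw [hr]; omega)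
        rw [h2, h1] at hu
        obtain rfl := Option.some.inj hu
        exact hu0Δ
      · exact hfa _ _ hu (by simp [rankPhi]; omega)
    choose b j hθ hj1 hj2 hbj hΔ using hyassigned
    -- consecutive ordering constraints
    have hcons : ∀ (i : Fin n) (h : i.1 + 1 < n), j i < j ⟨i.1 + 1, h⟩ := by
      intro i h
      have hc := hvf.2.2 _ (Or.inl ⟨i, h, rfl⟩) (fun s _ => htotf s)
      obtain ⟨_, _, b₁, j₁, b₂, j₂, h1, h2, hlt⟩ := hc
      simp only [restrictTo] at h1 h2
      rw [if_pos (Finset.mem_insert_self _ _)] at h1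
      rw [if_pos (Finset.mem_insert_of_mem (Finset.mem_singleton_self _))] at h2
      rw [hθ i] at h1
      rw [hθ ⟨i.1 + 1, h⟩] at h2
      have e1 := Option.some.inj h1
      have e2 := Option.some.inj h2
      injection e1 with e1'
      injection e2 with e2'
      have hj1' : j i = j₁ := congrArg Prod.snd e1'
      have hj2' : j ⟨i.1 + 1, h⟩ = j₂ := congrArg Prod.snd e2'
      rw [hj1', hj2']
      exact hlt
    have hjmono : ∀ i i' : Fin n, i.1 < i'.1 → j i < j i' := by
      have hstep : ∀ d (i i' : Fin n), i'.1 = i.1 + 1 + d → j i < j i' := by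
        intro d
        induction d with
        | zero =>
          intro i i' hi'
          have h : i.1 + 1 < n := by have := i'.isLt; omega
          have := hcons i h
          have he : i' = ⟨i.1 + 1, h⟩ := Fin.ext (by simp [hi'])
          rwa [he]
        | succ d ihd =>
          intro i i' hi'
          have ha : i.1 + 1 + d < n := by have := i'.isLt; omega
          have h1 := ihd i ⟨i.1 + 1 + d, ha⟩ rfl
          have h2 : (⟨i.1 + 1 + d, ha⟩ : Fin n).1 + 1 < n := by
            simp; have := i'.isLt; omega
          have h3 := hcons ⟨i.1 + 1 + d, ha⟩ h2
          have he : i' = ⟨(⟨i.1 + 1 + d, ha⟩ : Fin n).1 + 1, h2⟩ := Fin.ext (by simp; omega)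
          rw [he]
          omega
      intro i i' hlt
      exact hstep (i'.1 - i.1 - 1) i i' (by omega)
    -- pair indices are strictly monotone
    have hPmono : ∀ i i' : Fin n, i.1 < i'.1 → (j i + 1) / 2 < (j i' + 1) / 2 := by
      intro i i' hlt
      have hjj := hjmono i i' hlt
      by_contra hP
      have hodd : j i % 2 = 1 := by omega
      have hsucc : j i' = j i + 1 := by omega
      have hi0lt : (j i - 1) / 2 < n := by have := hj2 i; have := hj1 i; omega
      have hkey := hstruck ⟨(j i - 1) / 2, hi0lt⟩
      have h2i1 : 2 * ((j i - 1) / 2) + 1 = j i := by omega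
      have hbi : b i = false := by
        rw [hbj i, hodd]
        rfl
      have hbi' : b i' = true := by
        rw [hbj i', hsucc]
        have : (j i + 1) % 2 = 0 := by omega
        rw [this]
        rfl
      cases hyi : y ⟨(j i - 1) / 2, hi0lt⟩
      · -- struck user is (true, j i + 1) = user of i'
        apply hΔ i'
        simp only [hyi, Bool.not_false, Bool.false_eq_true, if_false] at hkey
        have : (Sum.inr (true, 2 * ((j i - 1) / 2) + 2) : UserPhi) =
            Sum.inr (b i', j i') := by
          rw [hbi', hsucc]
          congr 1
          congr 1
          omega
        rwa [this] at hkey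
      · -- struck user is (false, j i) = user of i
        apply hΔ i
        simp only [hyi, Bool.not_true, eq_self_iff_true, if_true] at hkey
        have : (Sum.inr (false, 2 * ((j i - 1) / 2) + 1) : UserPhi) =
            Sum.inr (b i, j i) := by
          rw [hbi, h2i1]
        rwa [this] at hkey
    have hPeq := squeeze_fin (fun i => (j i + 1) / 2) hPmono
      (fun i => by show 1 ≤ (j i + 1) / 2; have := hj1 i; omega)
      (fun i => by show (j i + 1) / 2 ≤ n; have := hj2 i; omega)
    -- each j i is the surviving index of pair i
    have hbval : ∀ i : Fin n, b i = y i := by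
      intro i
      have hPi := hPeq i
      have hrange : j i = 2 * i.1 + 1 ∨ j i = 2 * i.1 + 2 := by omega
      have hkey := hstruck i
      cases hyi : y i
      · simp only [hyi, Bool.not_false, Bool.false_eq_true, if_false] at hkey
        rcases hrange with hji | hji
        · rw [hbj i, hji]
          have : (2 * i.1 + 1) % 2 = 1 := by omega
          rw [this]
          rfl
        · exfalso
          apply hΔ i
          have hb : b i = true := by
            rw [hbj i, hji]
            have : (2 * i.1 + 2) % 2 = 0 := by omega
            rw [this]
            rfl
          rw [hb, hji]
          exact hkey
      · simp only [hyi, Bool.not_true, eq_self_iff_true, if_true] at hkey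
        rcases hrange with hji | hji
        · exfalso
          apply hΔ i
          have hb : b i = false := by
            rw [hbj i, hji]
            have : (2 * i.1 + 1) % 2 = 1 := by omega
            rw [this]
            rfl
          rw [hb, hji]
          exact hkey
        · rw [hbj i, hji]
          have : (2 * i.1 + 2) % 2 = 0 := by omega
          rw [this]
          rfl
    have hyval : yVal θf = y := by
      funext i
      simp only [yVal, hθ i]
      exact hbval i
    have hxval : xVal θf = xVal θx := by
      funext i
      have h1 : rankPhi (Sum.inl i : StepPhi n m) = i.1 := rfl
      have h2 : θf (Sum.inl i) = θx (Sum.inl i) := by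
        rw [hfe _ (by rw [h1]; have := i.isLt; omega),
          hext' _ (by rw [h1]; exact i.isLt)]
      simp only [xVal, h2]
    have hglob := hvf.2.2 _ (Or.inr rfl) (fun s _ => htotf s)
    have hre : restrictTo θf Finset.univ = θf := by
      funext s
      simp [restrictTo]
    obtain ⟨_, _, hφf⟩ := hglob
    rw [hre] at hφf
    rw [hxval, hyval] at hφf
    exact ⟨zVal θf, hφf⟩

end AuxConverse


section AuxGraph

/-- A walk of length exactly `l` (vertices not necessarily distinct). -/
def WalkLen {V : Type} (E : V → V → Prop) (l : ℕ) (x y : V) : Prop :=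
  ∃ f : Fin (l + 1) → V, f 0 = x ∧ f (Fin.last l) = y ∧
    ∀ i : Fin l, E (f i.castSucc) (f i.succ)

theorem walk_edge {V : Type} {E : V → V → Prop} {l : ℕ} {f : Fin (l + 1) → V}
    (he : ∀ i : Fin l, E (f i.castSucc) (f i.succ)) :
    ∀ a b (ha : a < l + 1) (hb : b < l + 1), a < l → b = a + 1 →
      E (f ⟨a, ha⟩) (f ⟨b, hb⟩) := by
  intro a b ha hb hal hba
  subst hba
  have h := he ⟨a, hal⟩
  rwa [Fin.castSucc_mk, Fin.succ_mk] at h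

theorem walk_to_path {V : Type} (E : V → V → Prop) (k : ℕ) :
    ∀ l, l ≤ k → ∀ x y : V, WalkLen E l x y → PathAtMost E k x y := by
  intro l
  induction l using Nat.strong_induction_on with
  | _ l ih =>
  intro hlk x y hw
  obtain ⟨f, h0, hl, he⟩ := hw
  by_cases hinj : Function.Injective f
  · exact ⟨l, hlk, f, hinj, h0, hl, he⟩
  · have hex : ∃ a b : Fin (l + 1), f a = f b ∧ a.1 < b.1 := by
      simp only [Function.Injective] at hinj
      push_neg at hinj
      obtain ⟨a, b, hfab, hab⟩ := hinj
      rcases Nat.lt_trichotomy a.1 b.1 with h | h | h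
      · exact ⟨a, b, hfab, h⟩
      · exact absurd (Fin.ext h) hab
      · exact ⟨b, a, hfab.symm, h⟩
    obtain ⟨a, b, hfab, hab⟩ := hex
    have hbl : b.1 ≤ l := by have := b.isLt; omega
    have hal : a.1 < l := by omega
    have hedge := walk_edge he
    have hfeq' : ∀ (c c' : ℕ) (hc : c < l + 1) (hc' : c' < l + 1), c = c' →
        f ⟨c, hc⟩ = f ⟨c', hc'⟩ := fun c c' hc hc' h => by subst h; rfl
    have hfmk : ∀ (c : Fin (l + 1)) (hc : c.1 < l + 1), f ⟨c.1, hc⟩ = f c :=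
      fun c hc => congrArg f (Fin.ext rfl)
    have hfl' : ∀ (hc : l < l + 1), f ⟨l, hc⟩ = y :=
      fun hc => (congrArg f (Fin.ext (by simp [Fin.val_last]))).trans hl
    set d := b.1 - a.1 with hddef
    have hd1 : 1 ≤ d := by omega
    set l' := l - d with hl'def
    have hl'a : a.1 ≤ l' := by omega
    refine ih l' (by omega) (by omega) x y
      ⟨fun t => if t.1 ≤ a.1 then f ⟨t.1, by have := t.isLt; omega⟩
        else f ⟨t.1 + d, by have := t.isLt; omega⟩, ?_, ?_, ?_⟩
    · beta_reduce
      rw [if_pos (by simp)]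
      rw [← h0]
      exact congrArg f (Fin.ext (by simp))
    · beta_reduce
      by_cases hcase : l' ≤ a.1
      · rw [if_pos (by simp [Fin.val_last]; omega)]
        refine (hfeq' _ a.1 _ a.isLt (by simp [Fin.val_last]; omega)).trans ?_
        refine (hfmk a a.isLt).trans (hfab.trans ?_)
        refine (hfmk b b.isLt).symm.trans ?_
        exact (hfeq' b.1 l b.isLt (by omega) (by omega)).trans (hfl' (by omega))
      · rw [if_neg (by simp [Fin.val_last]; omega)]
        refine (hfeq' _ l _ (by omega) (by simp [Fin.val_last]; omega)).trans (hfl' _)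
    · intro t
      have htl := t.isLt
      beta_reduce
      simp only [Fin.coe_castSucc, Fin.val_succ]
      by_cases h1 : t.1 + 1 ≤ a.1
      · rw [if_pos (by omega), if_pos h1]
        exact hedge t.1 (t.1 + 1) (by omega) (by omega) (by omega) rfl
      · by_cases h2 : t.1 ≤ a.1
        · rw [if_pos h2, if_neg h1]
          have hta : t.1 = a.1 := by omega
          have hstep := hedge b.1 (t.1 + 1 + d) (by omega) (by omega) (by omega) (by omega)
          refine Eq.mpr ?_ hstep
          have hX : f ⟨t.1, by omega⟩ = f ⟨b.1, by omega⟩ := by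
            refine (hfeq' t.1 a.1 (by omega) a.isLt hta).trans ?_
            refine (hfmk a _).trans (hfab.trans (hfmk b (by omega)).symm)
          rw [hX]
        · rw [if_neg h2, if_neg (by omega)]
          exact hedge (t.1 + d) (t.1 + 1 + d) (by omega) (by omega) (by omega) (by omega)

theorem walk_to_phi {n k : ℕ} (hn : 1 ≤ n) (hk : 2 ≤ k)
    {E : (Fin n → Bool) → (Fin n → Bool) → Prop} {x y : Fin n → Bool} {l : ℕ}
    (hlk : l ≤ k) (hw : WalkLen E l x y) : ∃ z, phiRad n k E x y z := by
  obtain ⟨f, h0, hl, he⟩ := hw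
  have hedge := walk_edge he
  rcases l with _ | l
  · exact ⟨fun _ => false, Or.inl (by rw [← h0, ← hl]; exact congrArg f (Fin.ext (by simp)))⟩
  rcases l with _ | i
  · have h01 := hedge 0 1 (by omega) (by omega) (by omega) rfl
    have e0 : f ⟨0, by omega⟩ = x := by rw [← h0]; exact congrArg f (Fin.ext (by simp))
    have e1 : f ⟨1, by omega⟩ = y := by
      rw [← hl]; exact congrArg f (Fin.ext (by simp [Fin.val_last]))
    rw [e0, e1] at h01
    exact ⟨fun _ => false, Or.inr (Or.inl h01)⟩
  · have hnpos : 0 < n := by omega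
    have h0' : ∀ (pf : 0 < i + 1 + 1 + 1), f ⟨0, pf⟩ = x := by
      intro pf; rw [← h0]; exact congrArg f (Fin.ext (by simp))
    have hl' : ∀ (pf : i + 1 + 1 < i + 1 + 1 + 1), f ⟨i + 1 + 1, pf⟩ = y := by
      intro pf; rw [← hl]; exact congrArg f (Fin.ext (by simp [Fin.val_last]))
    set z : Fin (n * (k - 1)) → Bool := fun a =>
      if h : a.1 / n + 1 < i + 1 + 1 + 1 then
        f ⟨a.1 / n + 1, h⟩ ⟨a.1 % n, Nat.mod_lt _ hnpos⟩ else false with hzdef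
    have hblock : ∀ (t : ℕ) (ht : t < k - 1) (hb : t + 1 < i + 1 + 1 + 1),
        zBlock z ⟨t, ht⟩ = f ⟨t + 1, hb⟩ := by
      intro t ht hb
      funext j
      have hdiv : (t * n + j.1) / n = t := by
        rw [Nat.mul_comm, Nat.mul_add_div hnpos, Nat.div_eq_of_lt j.isLt, Nat.add_zero]
      have hmod : (t * n + j.1) % n = j.1 := by
        rw [Nat.mul_comm, Nat.mul_add_mod, Nat.mod_eq_of_lt j.isLt]
      show z ⟨t * n + j.1, _⟩ = f ⟨t + 1, hb⟩ j
      simp only [hzdef]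
      simp only [hdiv, hmod]
      rw [dif_pos hb]
    refine ⟨z, Or.inr (Or.inr ⟨i + 1, by omega, by omega, ?_, ?_, ?_⟩)⟩
    · rw [hblock 0 _ (by omega), ← h0' (by omega)]
      exact hedge 0 (0 + 1) (by omega) (by omega) (by omega) rfl
    · intro j hj
      rw [hblock j _ (by omega), hblock (j + 1) _ (by omega)]
      exact hedge (j + 1) (j + 1 + 1) (by omega) (by omega) (by omega) rfl
    · rw [hblock (i + 1 - 1) _ (by omega), ← hl' (by omega)]
      exact hedge (i + 1 - 1 + 1) (i + 1 + 1) (by omega) (by omega) (by omega) (by omega)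

theorem phi_to_walk {n k : ℕ} (hn : 1 ≤ n) (hk : 2 ≤ k)
    {E : (Fin n → Bool) → (Fin n → Bool) → Prop} {x y : Fin n → Bool}
    {z : Fin (n * (k - 1)) → Bool} (h : phiRad n k E x y z) :
    ∃ l ≤ k, WalkLen E l x y := by
  rcases h with h | h | ⟨i, h1, h2, hfirst, hmid, hlast⟩
  · refine ⟨0, by omega, fun _ => x, rfl, h, fun i => absurd i.isLt (by omega)⟩
  · refine ⟨1, by omega, fun t => if t.1 = 0 then x else y, by simp, ?_, ?_⟩
    · show (if (Fin.last 1).1 = 0 then x else y) = y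
      rw [if_neg (by simp [Fin.val_last])]
    · intro t
      show E (if (t.castSucc).1 = 0 then x else y) (if (t.succ).1 = 0 then x else y)
      have ht : t.1 = 0 := by have := t.isLt; omega
      rw [if_pos (by simp [Fin.coe_castSucc, ht]), if_neg (by simp [Fin.val_succ])]
      exact h
  · have hfirst' : ∀ (a : ℕ) (ha : a < k - 1), a = 0 → E x (zBlock z ⟨a, ha⟩) := by
      intro a ha h'
      subst h'
      exact hfirst
    have hmid' : ∀ (a b : ℕ) (ha : a < k - 1) (hb : b < k - 1), b = a + 1 → a + 1 < i →
        E (zBlock z ⟨a, ha⟩) (zBlock z ⟨b, hb⟩) := by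
      intro a b ha hb hba hai
      subst hba
      exact hmid a hai
    have hlast' : ∀ (a : ℕ) (ha : a < k - 1), a = i - 1 → E (zBlock z ⟨a, ha⟩) y := by
      intro a ha h'
      subst h'
      exact hlast
    refine ⟨i + 1, by omega, fun t => if t.1 = 0 then x else
      if h2 : t.1 ≤ i then zBlock z ⟨t.1 - 1, by omega⟩ else y, by simp, ?_, ?_⟩
    · show (if (Fin.last (i + 1)).1 = 0 then x else _) = y
      rw [if_neg (by simp [Fin.val_last]), dif_neg (by simp [Fin.val_last])]
    · intro t
      have htl := t.isLt
      show E (if (t.castSucc).1 = 0 then x else _) (if (t.succ).1 = 0 then x else _)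
      simp only [Fin.coe_castSucc, Fin.val_succ]
      rcases Nat.eq_zero_or_pos t.1 with ht0 | htpos
      · rw [if_pos ht0, if_neg (by omega), dif_pos (by omega : t.1 + 1 ≤ i)]
        exact hfirst' _ _ (by omega)
      · by_cases hti : t.1 + 1 ≤ i
        · rw [if_neg (by omega), dif_pos (by omega : t.1 ≤ i), if_neg (by omega),
            dif_pos hti]
          exact hmid' (t.1 - 1) (t.1 + 1 - 1) _ _ (by omega) (by omega)
        · rw [if_neg (by omega), dif_pos (by omega : t.1 ≤ i), if_neg (by omega),
            dif_neg hti]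
          exact hlast' (t.1 - 1) _ (by omega)

theorem radius_iff_sat {n k : ℕ} (hn : 1 ≤ n) (hk : 2 ≤ k)
    (E : (Fin n → Bool) → (Fin n → Bool) → Prop) :
    RadiusAtMost E k ↔ ∃ x : Fin n → Bool, ∀ y, ∃ z, phiRad n k E x y z := by
  constructor
  · rintro ⟨u, hu⟩
    refine ⟨u, fun v => ?_⟩
    obtain ⟨l, hlk, f, hinj, h0, hl, he⟩ := hu v
    exact walk_to_phi hn hk hlk ⟨f, h0, hl, he⟩
  · rintro ⟨x, H⟩
    refine ⟨x, fun v => ?_⟩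
    obtain ⟨z, hz⟩ := H v
    obtain ⟨l, hlk, hw⟩ := phi_to_walk hn hk hz
    exact walk_to_path E k l hlk x v hw

end AuxGraph

/-- For a directed graph `G` on vertex set `Bool^n` with
edge relation `E`, the radius of `G` is at most `k` iff the workflow
authorization policy `W_φ` (with `φ = phiRad n k E`) is one-shot resilient
for budget `n`. -/
theorem radiusAtMost_iff_WPhi_oneShot_resilient
    (n k : ℕ) (hn : 1 ≤ n) (hk : 2 ≤ k)
    (E : (Fin n → Bool) → (Fin n → Bool) → Prop) :
    RadiusAtMost E k ↔
      (WPhi n (n * (k - 1)) (phiRad n k E)).OneShotResilient n := by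
  rw [radius_iff_sat hn hk E]
  constructor
  · exact fun h => forward_resilient hn h
  · exact fun h => extract_sat hn h

end Radius
end
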